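/- arXiv:1102.4478 — 5 statements merged into one kernel-verified Lean document; each statement's English description precedes it below -/
import Mathlib

section
/- Let γ : ℝ → ℝ² be a C^∞ curve with a 3/2-cusp at t = 0, with [γ'(t), γ''(t)] ≠ 0 for t ≠ 0 near 0, and let F be the C^∞ extension of the normalized affine curvature function (s_A)²·κ_A at t = 0. Then F(0) = 4/25 and F'(0) = 0. -/
noncomputable section
open Real Set Filter Topology

/-- The determinant `[a, b] = a₁b₂ − a₂b₁` of two vectors in the plane. -/
def det2 (a b : ℝ × ℝ) : ℝ := a.1 * b.2 - a.2 * b.1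

/-- The Euclidean norm on `ℝ × ℝ`. -/
def enorm2 (a : ℝ × ℝ) : ℝ := Real.sqrt (a.1 ^ 2 + a.2 ^ 2)

/-- The Euclidean arclength parameter of `γ` based at `0`. -/
def sG (γ : ℝ → ℝ × ℝ) (t : ℝ) : ℝ := ∫ u in (0:ℝ)..t, enorm2 (deriv γ u)

/-- The affine arclength parameter of `γ` based at `0`. -/
def sA (γ : ℝ → ℝ × ℝ) (t : ℝ) : ℝ :=
  ∫ u in (0:ℝ)..t, |det2 (deriv γ u) (iteratedDeriv 2 γ u)| ^ ((1:ℝ)/3)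

/-- The Euclidean curvature `κ_g = [γ', γ'']/‖γ'‖³`. -/
def kappaG (γ : ℝ → ℝ × ℝ) (t : ℝ) : ℝ :=
  det2 (deriv γ t) (iteratedDeriv 2 γ t) / enorm2 (deriv γ t) ^ 3

/-- The affine curvature `κ_A`. -/
def kappaA (γ : ℝ → ℝ × ℝ) (t : ℝ) : ℝ :=
  (3 * det2 (deriv γ t) (iteratedDeriv 2 γ t) * det2 (deriv γ t) (iteratedDeriv 4 γ t)
    + 12 * det2 (deriv γ t) (iteratedDeriv 2 γ t)
        * det2 (iteratedDeriv 2 γ t) (iteratedDeriv 3 γ t)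
    - 5 * det2 (deriv γ t) (iteratedDeriv 3 γ t) ^ 2)
  / (9 * |det2 (deriv γ t) (iteratedDeriv 2 γ t)| ^ ((8:ℝ)/3))

/-- `γ` has a 3/2-cusp at `t = 0`. -/
def HasCusp (γ : ℝ → ℝ × ℝ) : Prop :=
  deriv γ 0 = 0 ∧ det2 (iteratedDeriv 2 γ 0) (iteratedDeriv 3 γ 0) ≠ 0

/-- The Euclidean cuspidal curvature at a 3/2-cusp `t = 0`. -/
def muG (γ : ℝ → ℝ × ℝ) : ℝ :=
  det2 (iteratedDeriv 2 γ 0) (iteratedDeriv 3 γ 0) / enorm2 (iteratedDeriv 2 γ 0) ^ ((5:ℝ)/2)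

/-- The affine cuspidal curvature at a 3/2-cusp `t = 0`. -/
def muA (γ : ℝ → ℝ × ℝ) : ℝ :=
  (24 * det2 (iteratedDeriv 2 γ 0) (iteratedDeriv 3 γ 0)
      * det2 (iteratedDeriv 2 γ 0) (iteratedDeriv 5 γ 0)
   + 60 * det2 (iteratedDeriv 2 γ 0) (iteratedDeriv 3 γ 0)
      * det2 (iteratedDeriv 3 γ 0) (iteratedDeriv 4 γ 0)
   - 35 * det2 (iteratedDeriv 2 γ 0) (iteratedDeriv 4 γ 0) ^ 2)
  / |det2 (iteratedDeriv 2 γ 0) (iteratedDeriv 3 γ 0)| ^ ((12:ℝ)/5)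

/-- `γ` (regular at `0`) has a generic inflection point at `t = 0`. -/
def HasGenericInflection (γ : ℝ → ℝ × ℝ) : Prop :=
  deriv γ 0 ≠ 0 ∧ det2 (deriv γ 0) (iteratedDeriv 2 γ 0) = 0 ∧
    det2 (deriv γ 0) (iteratedDeriv 3 γ 0) ≠ 0

/-- The affine inflectional curvature at a generic inflection point `t = 0`. -/
def muI (γ : ℝ → ℝ × ℝ) : ℝ :=
  Real.sign (det2 (deriv γ 0) (iteratedDeriv 3 γ 0)) *
    (det2 (deriv γ 0) (iteratedDeriv 4 γ 0)
      - 6 * det2 (iteratedDeriv 2 γ 0) (iteratedDeriv 3 γ 0))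
  / |det2 (deriv γ 0) (iteratedDeriv 3 γ 0)| ^ ((5:ℝ)/4)

/-- The affine map `x ↦ Ax + v` on the plane, with `A = (a b; c d)`. -/
def applyAff (a b c d : ℝ) (v : ℝ × ℝ) (p : ℝ × ℝ) : ℝ × ℝ :=
  (a * p.1 + b * p.2 + v.1, c * p.1 + d * p.2 + v.2)


set_option maxHeartbeats 800000
open Asymptotics MeasureTheory


lemma aux_det2_hasDerivAt {f g : ℝ → ℝ × ℝ} {f' g' : ℝ × ℝ} {t : ℝ}
    (hf : HasDerivAt f f' t) (hg : HasDerivAt g g' t) :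
    HasDerivAt (fun u => det2 (f u) (g u)) (det2 f' (g t) + det2 (f t) g') t := by
  have h1 : HasDerivAt (fun u => (f u).1) f'.1 t :=
    (ContinuousLinearMap.fst ℝ ℝ ℝ).hasFDerivAt.comp_hasDerivAt t hf
  have h2 : HasDerivAt (fun u => (f u).2) f'.2 t :=
    (ContinuousLinearMap.snd ℝ ℝ ℝ).hasFDerivAt.comp_hasDerivAt t hf
  have h3 : HasDerivAt (fun u => (g u).1) g'.1 t :=
    (ContinuousLinearMap.fst ℝ ℝ ℝ).hasFDerivAt.comp_hasDerivAt t hg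
  have h4 : HasDerivAt (fun u => (g u).2) g'.2 t :=
    (ContinuousLinearMap.snd ℝ ℝ ℝ).hasFDerivAt.comp_hasDerivAt t hg
  have := (h1.mul h4).sub (h2.mul h3)
  convert this using 1
  all_goals first | rfl | (unfold det2; ring)

lemma aux_det2_continuous {f g : ℝ → ℝ × ℝ} (hf : Continuous f) (hg : Continuous g) :
    Continuous (fun u => det2 (f u) (g u)) := by
  unfold det2; fun_prop

lemma aux_int_littleO {f : ℝ → ℝ} (hf : Continuous f) {a : ℝ} (ha : 0 ≤ a)
    (h : f =o[𝓝[>] (0:ℝ)] fun t => t ^ a) :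
    (fun t => ∫ u in (0:ℝ)..t, f u) =o[𝓝[>] (0:ℝ)] fun t => t ^ (a + 1) := by
  rw [Asymptotics.isLittleO_iff] at h ⊢
  intro c hc
  have ha1 : (0:ℝ) < a + 1 := by linarith
  have hc' : 0 < c * (a + 1) := by positivity
  obtain ⟨δ, hδ, hδ2⟩ := mem_nhdsGT_iff_exists_Ioo_subset.1 (h hc')
  filter_upwards [Ioo_mem_nhdsGT_of_mem (Set.mem_Ico.2 ⟨le_refl (0:ℝ), hδ⟩)] with t ht
  have ht0 : (0:ℝ) < t := ht.1
  have hbound : ∀ u ∈ Set.Ioc (0:ℝ) t, ‖f u‖ ≤ c * (a+1) * u ^ a := by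
    intro u hu
    have : u ∈ Set.Ioo (0:ℝ) δ := ⟨hu.1, lt_of_le_of_lt hu.2 ht.2⟩
    have := hδ2 this
    simp only [Set.mem_setOf_eq] at this
    calc ‖f u‖ ≤ c * (a+1) * ‖u ^ a‖ := this
    _ = c * (a+1) * u ^ a := by
        rw [Real.norm_eq_abs, abs_of_nonneg (Real.rpow_nonneg hu.1.le a)]
  have key : ‖∫ u in (0:ℝ)..t, f u‖ ≤ ∫ u in (0:ℝ)..t, c * (a+1) * u ^ a := by
    refine (intervalIntegral.norm_integral_le_integral_norm ht0.le).trans ?_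
    refine intervalIntegral.integral_mono_ae_restrict ht0.le
      (hf.norm.intervalIntegrable _ _)
      ((continuous_const.mul (Real.continuous_rpow_const ha)).intervalIntegrable _ _) ?_
    rw [Filter.EventuallyLE, MeasureTheory.ae_restrict_iff' measurableSet_Icc]
    refine MeasureTheory.ae_iff.2 (measure_mono_null ?_ (Real.volume_singleton (a := (0:ℝ))))
    intro x hx
    simp only [Set.mem_setOf_eq, not_forall] at hx
    obtain ⟨hx1, hx2⟩ := hx
    simp only [Set.mem_singleton_iff]
    by_contra hx0
    exact hx2 (hbound x ⟨lt_of_le_of_ne hx1.1 (Ne.symm hx0), hx1.2⟩)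
  have hint : ∫ u in (0:ℝ)..t, c * (a+1) * u ^ a = c * t ^ (a+1) := by
    rw [intervalIntegral.integral_const_mul, integral_rpow (Or.inl (by linarith : (-1:ℝ) < a)),
      Real.zero_rpow (ne_of_gt ha1)]
    field_simp
    ring
  calc ‖∫ u in (0:ℝ)..t, f u‖ ≤ c * t ^ (a+1) := by rw [← hint]; exact key
  _ = c * ‖t ^ (a+1)‖ := by rw [Real.norm_eq_abs, abs_of_nonneg (Real.rpow_nonneg ht0.le _)]

lemma aux_step {f f' : ℝ → ℝ} (hd : ∀ t, HasDerivAt f (f' t) t) (hc : Continuous f')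
    (h0 : f 0 = 0) {a : ℝ} (ha : 0 ≤ a) (h : f' =o[𝓝[>] (0:ℝ)] fun t => t ^ a) :
    f =o[𝓝[>] (0:ℝ)] fun t => t ^ (a + 1) := by
  have heq : ∀ t, (∫ u in (0:ℝ)..t, f' u) = f t := by
    intro t
    rw [intervalIntegral.integral_eq_sub_of_hasDerivAt (fun x _ => hd x)
      (hc.intervalIntegrable _ _), h0, sub_zero]
  exact (aux_int_littleO hc ha h).congr heq (fun _ => rfl)

lemma aux_step_nat {f f' : ℝ → ℝ} (hd : ∀ t, HasDerivAt f (f' t) t) (hc : Continuous f')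
    (h0 : f 0 = 0) {n : ℕ} (h : f' =o[𝓝[>] (0:ℝ)] fun t => t ^ n) :
    f =o[𝓝[>] (0:ℝ)] fun t => t ^ (n+1) := by
  have h' : f' =o[𝓝[>] (0:ℝ)] fun t => t ^ ((n:ℝ)) :=
    h.congr (fun _ => rfl) (fun t => (Real.rpow_natCast t n).symm)
  have := aux_step hd hc h0 (by positivity) h'
  refine this.congr (fun _ => rfl) (fun t => ?_)
  rw [show ((n:ℝ) + 1) = (((n+1 : ℕ)):ℝ) by push_cast; ring, Real.rpow_natCast]

def exp1 (f : ℝ → ℝ) (c0 c1 : ℝ) : Prop :=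
  Filter.Tendsto f (𝓝[>] (0:ℝ)) (𝓝 c0) ∧
    Filter.Tendsto (fun t => (f t - c0) / t) (𝓝[>] (0:ℝ)) (𝓝 c1)

lemma exp1_const (c : ℝ) : exp1 (fun _ => c) c 0 := by
  constructor
  · exact tendsto_const_nhds
  · have : (fun t : ℝ => (c - c) / t) = fun _ => (0:ℝ) := by funext t; simp
    rw [this]; exact tendsto_const_nhds

lemma exp1.mul {f g : ℝ → ℝ} {a0 a1 b0 b1 : ℝ} (hf : exp1 f a0 a1) (hg : exp1 g b0 b1) :
    exp1 (fun t => f t * g t) (a0 * b0) (a0 * b1 + a1 * b0) := by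
  constructor
  · exact hf.1.mul hg.1
  · have key : ∀ t : ℝ, f t * ((g t - b0) / t) + ((f t - a0) / t) * b0
        = (f t * g t - a0 * b0) / t := by
      intro t
      by_cases ht : t = 0
      · simp [ht]
      · field_simp; ring
    have h2 := (hf.1.mul hg.2).add (hf.2.mul (tendsto_const_nhds (x := b0)))
    exact Tendsto.congr key h2

lemma exp1.comp {f : ℝ → ℝ} {c0 c1 : ℝ} (hf : exp1 f c0 c1) {g : ℝ → ℝ} {g' : ℝ}
    (hg : HasDerivAt g g' c0) : exp1 (fun t => g (f t)) (g c0) (g' * c1) := by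
  have hR : (fun x => g x - g c0 - (x - c0) * g') =o[𝓝 c0] fun x => x - c0 := by
    have := hasDerivAt_iff_isLittleO.1 hg
    refine this.congr (fun x => ?_) (fun x => rfl)
    simp only [smul_eq_mul]
  have hcomp : (fun t => g (f t) - g c0 - (f t - c0) * g') =o[𝓝[>] (0:ℝ)] fun t => f t - c0 :=
    hR.comp_tendsto hf.1
  have hO : (fun t => f t - c0) =O[𝓝[>] (0:ℝ)] fun t => t := by
    have h1 : (fun t => (f t - c0) / t) =O[𝓝[>] (0:ℝ)] (fun _ => (1:ℝ)) :=
      hf.2.isBigO_one ℝ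
    have h2 := h1.mul (Asymptotics.isBigO_refl (fun t : ℝ => t) (𝓝[>] (0:ℝ)))
    refine h2.congr' ?_ ?_
    · filter_upwards [self_mem_nhdsWithin] with t ht
      exact div_mul_cancel₀ _ (ne_of_gt ht)
    · filter_upwards with t
      simp
  have hRt : (fun t => g (f t) - g c0 - (f t - c0) * g') =o[𝓝[>] (0:ℝ)] fun t => t :=
    hcomp.trans_isBigO hO
  constructor
  · exact (hg.continuousAt.tendsto).comp hf.1
  · have h3 := hRt.tendsto_div_nhds_zero
    have h4 := ((tendsto_const_nhds (x := g')).mul hf.2).add h3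
    rw [add_zero] at h4
    refine Tendsto.congr (fun t => ?_) h4
    by_cases ht : t = 0
    · simp [ht]
    · field_simp; ring

lemma exp1_div_rpow {f : ℝ → ℝ} {b c0 c1 : ℝ} (hb : 0 ≤ b)
    (h : (fun t => f t - (c0 * t ^ b + c1 * t ^ (b+1))) =o[𝓝[>] (0:ℝ)] fun t => t ^ (b+1)) :
    exp1 (fun t => f t / t ^ b) c0 c1 := by
  have h2 := h.tendsto_div_nhds_zero
  have key : Filter.Tendsto (fun t => (f t / t ^ b - c0) / t) (𝓝[>] (0:ℝ)) (𝓝 c1) := by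
    have h3 := h2.add_const c1
    rw [zero_add] at h3
    refine h3.congr' ?_
    filter_upwards [self_mem_nhdsWithin] with t ht
    have ht0 : (0:ℝ) < t := ht
    have hb0 : t ^ b ≠ 0 := ne_of_gt (Real.rpow_pos_of_pos ht0 b)
    have hb1 : t ^ (b+1) = t ^ b * t := by
      rw [Real.rpow_add ht0, Real.rpow_one]
    rw [hb1]
    field_simp
    ring
  constructor
  · have h5 : Filter.Tendsto (fun t : ℝ => c0 + ((f t / t ^ b - c0) / t) * t)
        (𝓝[>] (0:ℝ)) (𝓝 (c0 + c1 * 0)) :=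
      tendsto_const_nhds.add (key.mul ((continuous_id.tendsto (0:ℝ)).mono_left nhdsWithin_le_nhds))
    rw [mul_zero, add_zero] at h5
    refine h5.congr' ?_
    filter_upwards [self_mem_nhdsWithin] with t ht
    have ht0 : (0:ℝ) < t := ht
    field_simp
    ring
  · exact key

lemma aux_hasDerivAt_littleO {f : ℝ → ℝ} {d : ℝ} (h : HasDerivAt f d 0) :
    (fun t => f t - (f 0 + d * t)) =o[𝓝[>] (0:ℝ)] fun t => t := by
  have h1 := hasDerivAt_iff_isLittleO.1 h
  refine ((h1.mono nhdsWithin_le_nhds).congr (fun t => ?_) (fun t => by simp))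
  simp [smul_eq_mul]; ring

lemma aux_hasDerivAt_abs_rpow {c s r : ℝ} (hc : c ≠ 0) (hs : s * c = |c|) :
    HasDerivAt (fun x => |x| ^ r) (r * |c| ^ (r-1) * s) c := by
  have habs : |c| ≠ 0 := abs_ne_zero.2 hc
  have hder : HasDerivAt (fun x => (s*x) ^ r) (r * |c| ^ (r-1) * s) c := by
    have h1 : HasDerivAt (fun x : ℝ => s * x) s c := by
      simpa using (hasDerivAt_id c).const_mul s
    have h2 : HasDerivAt (fun y : ℝ => y ^ r) (r * (s*c) ^ (r-1)) (s*c) :=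
      Real.hasDerivAt_rpow_const (Or.inl (by rw [hs]; exact habs))
    have := h2.comp c h1
    rw [hs] at this
    exact this
  refine hder.congr_of_eventuallyEq ?_
  rcases lt_or_gt_of_ne hc with h | h
  · have hsneg : s = -1 := by
      have : s * c = -c := by rw [hs, abs_of_neg h]
      field_simp at this
      nlinarith [this]
    filter_upwards [eventually_lt_nhds h] with x hx
    rw [abs_of_neg hx, hsneg]
    norm_num
  · have hspos : s = 1 := by
      have : s * c = c := by rw [hs, abs_of_pos h]
      field_simp at this
      exact this
    filter_upwards [eventually_gt_nhds h] with x hx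
    rw [abs_of_pos hx, hspos, one_mul]

def ee (γ : ℝ → ℝ × ℝ) (i j : ℕ) (t : ℝ) : ℝ :=
  det2 (iteratedDeriv i γ t) (iteratedDeriv j γ t)

lemma exp1_congr {f : ℝ → ℝ} {c0 c1 c0' c1' : ℝ} (h : exp1 f c0 c1)
    (h0 : c0 = c0') (h1 : c1 = c1') : exp1 f c0' c1' := h0 ▸ h1 ▸ h

set_option maxHeartbeats 2000000 in
lemma aux_key (γ : ℝ → ℝ × ℝ) (hγ : ContDiff ℝ (⊤:ℕ∞) γ)
    (h10 : iteratedDeriv 1 γ 0 = 0) (hμ : ee γ 2 3 0 ≠ 0)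
    (hreg : ∀ᶠ t in 𝓝[>] (0:ℝ), ee γ 1 2 t ≠ 0) :
    Filter.Tendsto (fun t => sA γ t ^ 2 * kappaA γ t) (𝓝[>] (0:ℝ)) (𝓝 (4/25)) ∧
    Filter.Tendsto (fun t => (sA γ t ^ 2 * kappaA γ t - 4/25) / t) (𝓝[>] (0:ℝ)) (𝓝 0) := by
  have hdiff : ∀ n : ℕ, Differentiable ℝ (iteratedDeriv n γ) := fun n =>
    hγ.differentiable_iteratedDeriv n (by exact_mod_cast lt_top_iff_ne_top.2 (by simp))
  have hD : ∀ (n : ℕ) (t : ℝ), HasDerivAt (iteratedDeriv n γ) (iteratedDeriv (n+1) γ t) t := by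
    intro n t
    rw [iteratedDeriv_succ]
    exact ((hdiff n) t).hasDerivAt
  have hE : ∀ (i j : ℕ) (t : ℝ), HasDerivAt (ee γ i j) (ee γ (i+1) j t + ee γ i (j+1) t) t :=
    fun i j t => aux_det2_hasDerivAt (hD i t) (hD j t)
  have hEc : ∀ i j : ℕ, Continuous (ee γ i j) :=
    fun i j => aux_det2_continuous (hdiff i).continuous (hdiff j).continuous
  have h1j : ∀ j : ℕ, ee γ 1 j 0 = 0 := fun j => by simp [ee, h10, det2]
  have hii : ∀ (i : ℕ) (t : ℝ), ee γ i i t = 0 := fun i t => by simp [ee, det2, mul_comm]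
  set μ := ee γ 2 3 0 with hμdef
  set p := ee γ 2 4 0 with hpdef
  -- first-order expansions of the e-functions
  have hE14 : (fun t => ee γ 1 4 t - p * t) =o[𝓝[>] (0:ℝ)] fun t => t := by
    have h' : HasDerivAt (ee γ 1 4) p 0 := by
      have := hE 1 4 0; rwa [h1j 5, add_zero, ← hpdef] at this
    have := aux_hasDerivAt_littleO h'
    simpa [h1j 4] using this
  have hE23 : (fun t => ee γ 2 3 t - (μ + p * t)) =o[𝓝[>] (0:ℝ)] fun t => t := by
    have h' : HasDerivAt (ee γ 2 3) p 0 := by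
      have := hE 2 3 0; rwa [hii 3 0, zero_add, ← hpdef] at this
    have := aux_hasDerivAt_littleO h'
    simpa [← hμdef] using this
  have hsum1 : (fun t => (ee γ 2 3 t + ee γ 1 4 t) - (μ + 2*p*t)) =o[𝓝[>] (0:ℝ)] fun t => t := by
    have := hE23.add hE14
    exact this.congr (fun t => by ring) (fun t => rfl)
  have hE13 : (fun t => ee γ 1 3 t - (μ*t + p*t^2)) =o[𝓝[>] (0:ℝ)] fun t => t^2 := by
    have hder : ∀ t, HasDerivAt (fun t => ee γ 1 3 t - (μ*t + p*t^2))
        ((ee γ 2 3 t + ee γ 1 4 t) - (μ + 2*p*t)) t := by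
      intro t
      have h1 := hE 1 3 t
      have h2 : HasDerivAt (fun t : ℝ => μ*t + p*t^2) (μ + 2*p*t) t := by
        have := ((hasDerivAt_id t).const_mul μ).add ((hasDerivAt_pow 2 t).const_mul p)
        convert this using 1
        all_goals first | rfl | (push_cast; ring)
      exact h1.sub h2
    have hcont : Continuous fun t => (ee γ 2 3 t + ee γ 1 4 t) - (μ + 2*p*t) := by
      refine ((hEc 2 3).add (hEc 1 4)).sub (by fun_prop)
    have h1 : (fun t => (ee γ 2 3 t + ee γ 1 4 t) - (μ + 2*p*t)) =o[𝓝[>] (0:ℝ)] fun t => t^1 :=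
      hsum1.congr (fun _ => rfl) (fun t => (pow_one t).symm)
    have := aux_step_nat hder hcont (by simp [h1j 3]) h1
    simpa using this
  have hd3 : (fun t => ee γ 1 2 t - (μ/2*t^2 + p/3*t^3)) =o[𝓝[>] (0:ℝ)] fun t => t^3 := by
    have hder : ∀ t, HasDerivAt (fun t => ee γ 1 2 t - (μ/2*t^2 + p/3*t^3))
        ((ee γ 2 2 t + ee γ 1 3 t) - (μ*t + p*t^2)) t := by
      intro t
      have h1 := hE 1 2 t
      have h2 : HasDerivAt (fun t : ℝ => μ/2*t^2 + p/3*t^3) (μ*t + p*t^2) t := by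
        have := ((hasDerivAt_pow 2 t).const_mul (μ/2)).add ((hasDerivAt_pow 3 t).const_mul (p/3))
        convert this using 1
        all_goals first | rfl | (push_cast; ring)
      exact h1.sub h2
    have hcont : Continuous fun t => (ee γ 2 2 t + ee γ 1 3 t) - (μ*t + p*t^2) := by
      refine ((hEc 2 2).add (hEc 1 3)).sub (by fun_prop)
    have h2 : (fun t => (ee γ 2 2 t + ee γ 1 3 t) - (μ*t + p*t^2)) =o[𝓝[>] (0:ℝ)] fun t => t^2 :=
      hE13.congr (fun t => by rw [hii 2 t]; ring) (fun _ => rfl)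
    have := aux_step_nat hder hcont (by simp [h1j 2]) h2
    simpa using this
  -- big-O facts
  have hpow10 : (fun t : ℝ => t) =O[𝓝[>] (0:ℝ)] (fun _ => (1:ℝ)) :=
    ((continuous_id.tendsto (0:ℝ)).mono_left nhdsWithin_le_nhds).isBigO_one ℝ
  have hpowsucc : ∀ n : ℕ, (fun t : ℝ => t^(n+1)) =O[𝓝[>] (0:ℝ)] fun t => t^n := by
    intro n
    have := (Asymptotics.isBigO_refl (fun t : ℝ => t^n) (𝓝[>] (0:ℝ))).mul hpow10
    exact this.congr (fun t => by ring) (fun t => by ring)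
  have haffO : ∀ a b : ℝ, (fun t : ℝ => a + b*t) =O[𝓝[>] (0:ℝ)] (fun _ => (1:ℝ)) := by
    intro a b
    have h1 : Filter.Tendsto (fun t : ℝ => a + b*t) (𝓝[>] (0:ℝ)) (𝓝 (a + b*0)) :=
      (Continuous.tendsto (by fun_prop) 0).mono_left nhdsWithin_le_nhds
    exact h1.isBigO_one ℝ
  have hP2O : (fun t : ℝ => μ/2*t^2 + p/3*t^3) =O[𝓝[>] (0:ℝ)] fun t => t^2 := by
    have := (Asymptotics.isBigO_refl (fun t : ℝ => t^2) (𝓝[>] (0:ℝ))).mul (haffO (μ/2) (p/3))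
    exact this.congr (fun t => by ring) (fun t => by ring)
  have hQO : (fun t : ℝ => μ*t + p*t^2) =O[𝓝[>] (0:ℝ)] fun t => t^1 := by
    have := (Asymptotics.isBigO_refl (fun t : ℝ => t^1) (𝓝[>] (0:ℝ))).mul (haffO μ p)
    exact this.congr (fun t => by ring) (fun t => by ring)
  have he12O : (fun t => ee γ 1 2 t) =O[𝓝[>] (0:ℝ)] fun t => t^2 := by
    have h1 := (hd3.isBigO.trans (hpowsucc 2)).add hP2O
    exact h1.congr (fun t => by ring) (fun t => by ring)
  have he13O : (fun t => ee γ 1 3 t) =O[𝓝[>] (0:ℝ)] fun t => t^1 := by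
    have h1 := (hE13.isBigO.trans (hpowsucc 1)).add hQO
    exact h1.congr (fun t => by ring) (fun t => by ring)
  -- expansion of the curvature numerator
  have hN : (fun t => (3*ee γ 1 2 t*ee γ 1 4 t + 12*ee γ 1 2 t*ee γ 2 3 t - 5*ee γ 1 3 t^2)
      - (μ^2*t^2 + 3/2*μ*p*t^3)) =o[𝓝[>] (0:ℝ)] fun t => t^3 := by
    have hE14' : (fun t => ee γ 1 4 t - p*t) =o[𝓝[>] (0:ℝ)] fun t => t^1 :=
      hE14.congr (fun _ => rfl) (fun t => (pow_one t).symm)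
    have hE23' : (fun t => ee γ 2 3 t - (μ + p*t)) =o[𝓝[>] (0:ℝ)] fun t => t^1 :=
      hE23.congr (fun _ => rfl) (fun t => (pow_one t).symm)
    have TA : (fun t => 3*(ee γ 1 2 t)*(ee γ 1 4 t - p*t)) =o[𝓝[>] (0:ℝ)] fun t => t^3 := by
      have := (he12O.mul_isLittleO hE14').const_mul_left 3
      exact this.congr (fun t => by ring) (fun t => by ring)
    have TB : (fun t => (3*(p*t))*(ee γ 1 2 t - (μ/2*t^2 + p/3*t^3)))
        =o[𝓝[>] (0:ℝ)] fun t => t^3 := by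
      have h0 : (fun t : ℝ => 3*(p*t)) =O[𝓝[>] (0:ℝ)] (fun _ => (1:ℝ)) := by
        have := haffO 0 (3*p); exact this.congr (fun t => by ring) (fun t => rfl)
      have := h0.mul_isLittleO hd3
      exact this.congr (fun t => rfl) (fun t => by ring)
    have TC : (fun t => 12*(ee γ 1 2 t)*(ee γ 2 3 t - (μ + p*t))) =o[𝓝[>] (0:ℝ)] fun t => t^3 := by
      have := (he12O.mul_isLittleO hE23').const_mul_left 12
      exact this.congr (fun t => by ring) (fun t => by ring)
    have TD : (fun t => (12*(μ + p*t))*(ee γ 1 2 t - (μ/2*t^2 + p/3*t^3)))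
        =o[𝓝[>] (0:ℝ)] fun t => t^3 := by
      have h0 : (fun t : ℝ => 12*(μ + p*t)) =O[𝓝[>] (0:ℝ)] (fun _ => (1:ℝ)) := by
        have := haffO (12*μ) (12*p); exact this.congr (fun t => by ring) (fun t => rfl)
      have := h0.mul_isLittleO hd3
      exact this.congr (fun t => rfl) (fun t => by ring)
    have TE : (fun t => 5*(ee γ 1 3 t)*(ee γ 1 3 t - (μ*t + p*t^2)))
        =o[𝓝[>] (0:ℝ)] fun t => t^3 := by
      have := (he13O.mul_isLittleO hE13).const_mul_left 5
      exact this.congr (fun t => by ring) (fun t => by ring)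
    have TF : (fun t => (5*(μ*t + p*t^2))*(ee γ 1 3 t - (μ*t + p*t^2)))
        =o[𝓝[>] (0:ℝ)] fun t => t^3 := by
      have h0 : (fun t : ℝ => 5*(μ*t + p*t^2)) =O[𝓝[>] (0:ℝ)] fun t => t^1 := by
        have := hQO.const_mul_left 5
        exact this.congr (fun t => by ring) (fun t => rfl)
      have := h0.mul_isLittleO hE13
      exact this.congr (fun t => rfl) (fun t => by ring)
    have big := ((((TA.add TB).add TC).add TD).sub TE).sub TF
    exact big.congr (fun t => by ring) (fun t => rfl)
  -- pass to rpow form and exp1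
  have hrpow2 : ∀ t : ℝ, t ^ ((2:ℝ)) = t^(2:ℕ) := by
    intro t; rw [show ((2:ℝ)) = ((2:ℕ):ℝ) by norm_num, Real.rpow_natCast]
  have hrpow23 : ∀ t : ℝ, t ^ ((2:ℝ)+1) = t^(3:ℕ) := by
    intro t; rw [show ((2:ℝ)+1) = ((3:ℕ):ℝ) by norm_num, Real.rpow_natCast]
  have hH : exp1 (fun t => ee γ 1 2 t / t ^ ((2:ℝ))) (μ/2) (p/3) := by
    apply exp1_div_rpow (by norm_num)
    refine hd3.congr (fun t => ?_) (fun t => ?_)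
    · rw [hrpow2, hrpow23]
    · rw [hrpow23]
  have hK : exp1 (fun t => (3*ee γ 1 2 t*ee γ 1 4 t + 12*ee γ 1 2 t*ee γ 2 3 t - 5*ee γ 1 3 t^2)
      / t ^ ((2:ℝ))) (μ^2) (3/2*μ*p) := by
    apply exp1_div_rpow (by norm_num)
    refine hN.congr (fun t => ?_) (fun t => ?_)
    · rw [hrpow2, hrpow23]
    · rw [hrpow23]
  -- sign and cube root
  have habsμ : (0:ℝ) < |μ| := abs_pos.2 hμ
  obtain ⟨s, hs1, hsor⟩ : ∃ s : ℝ, s * μ = |μ| ∧ (s = 1 ∨ s = -1) := by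
    rcases lt_or_gt_of_ne hμ with h | h
    · exact ⟨-1, by rw [abs_of_neg h]; ring, Or.inr rfl⟩
    · exact ⟨1, by rw [abs_of_pos h]; ring, Or.inl rfl⟩
  have hs2 : s * s = 1 := by rcases hsor with rfl | rfl <;> norm_num
  set m : ℝ := (|μ|/2) ^ ((1:ℝ)/3) with hmdef
  have hm0 : 0 < m := Real.rpow_pos_of_pos (by positivity) _
  have hm' : m ≠ 0 := ne_of_gt hm0
  have hmr : ∀ r : ℝ, (|μ|/2) ^ r = m ^ (3*r) := by
    intro r
    rw [hmdef, ← Real.rpow_mul (by positivity : (0:ℝ) ≤ |μ|/2)]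
    congr 1; ring
  have hm3 : |μ| = 2 * m^(3:ℕ) := by
    have h1 := hmr 1
    rw [Real.rpow_one, show (3*(1:ℝ)) = ((3:ℕ):ℝ) by norm_num, Real.rpow_natCast] at h1
    linarith
  have hμm : μ = 2*s*m^(3:ℕ) := by
    have h1 : s * (s*μ) = s * |μ| := by rw [hs1]
    rw [← mul_assoc, hs2, one_mul, hm3] at h1
    rw [h1]; ring
  have hc2 : μ/2 ≠ 0 := div_ne_zero hμ two_ne_zero
  have habs2 : |μ/2| = |μ|/2 := by rw [abs_div, abs_two]
  have hs2' : s * (μ/2) = |μ/2| := by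
    have h1 : s*(μ/2) = (s*μ)/2 := by ring
    rw [h1, hs1, habs2]
  set q : ℝ := s*p/(9*m^2) with hqdef
  -- expansion of |H|^{1/3}
  have hΦ : exp1 (fun t => |ee γ 1 2 t / t ^ ((2:ℝ))| ^ ((1:ℝ)/3)) m q := by
    refine exp1_congr (hH.comp (aux_hasDerivAt_abs_rpow hc2 hs2' (r := (1:ℝ)/3))) ?_ ?_
    · show |μ/2| ^ ((1:ℝ)/3) = m
      rw [habs2, hmdef]
    · show (1:ℝ)/3 * |μ/2| ^ ((1:ℝ)/3 - 1) * s * (p/3) = q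
      rw [habs2, hmr ((1:ℝ)/3 - 1), show (3*((1:ℝ)/3 - 1)) = -((2:ℕ):ℝ) by norm_num,
        Real.rpow_neg hm0.le, Real.rpow_natCast, hqdef]
      field_simp [hm']
      try ring
      try (left; trivial)
  -- expansion of |H|^{8/3}
  have hW : exp1 (fun t => |ee γ 1 2 t / t ^ ((2:ℝ))| ^ ((8:ℝ)/3)) (m^(8:ℕ)) (8/9*m^(5:ℕ)*s*p) := by
    refine exp1_congr (hH.comp (aux_hasDerivAt_abs_rpow hc2 hs2' (r := (8:ℝ)/3))) ?_ ?_
    · show |μ/2| ^ ((8:ℝ)/3) = m^(8:ℕ)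
      rw [habs2, hmr ((8:ℝ)/3), show (3*((8:ℝ)/3)) = ((8:ℕ):ℝ) by norm_num, Real.rpow_natCast]
    · show (8:ℝ)/3 * |μ/2| ^ ((8:ℝ)/3 - 1) * s * (p/3) = 8/9*m^(5:ℕ)*s*p
      rw [habs2, hmr ((8:ℝ)/3 - 1), show (3*((8:ℝ)/3 - 1)) = ((5:ℕ):ℝ) by norm_num,
        Real.rpow_natCast]
      ring
  -- expansion of s_A
  have hρ : (fun t => |ee γ 1 2 t / t ^ ((2:ℝ))| ^ ((1:ℝ)/3) - m - q*t)
      =o[𝓝[>] (0:ℝ)] fun t => t := by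
    rw [Asymptotics.isLittleO_iff_tendsto']
    · have h1 := hΦ.2.sub_const q
      rw [sub_self] at h1
      refine h1.congr' ?_
      filter_upwards [self_mem_nhdsWithin] with t ht
      have ht0 : t ≠ 0 := ne_of_gt ht
      conv_rhs => rw [sub_div, mul_div_assoc, div_self ht0, mul_one]
    · filter_upwards [self_mem_nhdsWithin] with t ht h
      exact absurd h (ne_of_gt ht)
  have hEcont13 : Continuous (fun u => |ee γ 1 2 u| ^ ((1:ℝ)/3)) :=
    (hEc 1 2).abs.rpow_const (fun x => Or.inr (by norm_num))
  have hψcont : Continuous (fun u : ℝ =>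
      |ee γ 1 2 u| ^ ((1:ℝ)/3) - (m*u^((2:ℝ)/3) + q*u^((5:ℝ)/3))) := by
    refine hEcont13.sub (Continuous.add ?_ ?_)
    · exact continuous_const.mul (Real.continuous_rpow_const (by norm_num))
    · exact continuous_const.mul (Real.continuous_rpow_const (by norm_num))
  have hψ : (fun u : ℝ => |ee γ 1 2 u| ^ ((1:ℝ)/3) - (m*u^((2:ℝ)/3) + q*u^((5:ℝ)/3)))
      =o[𝓝[>] (0:ℝ)] fun u => u ^ ((5:ℝ)/3) := by
    have base := (Asymptotics.isBigO_refl (fun u : ℝ => u ^ ((2:ℝ)/3))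
      (𝓝[>] (0:ℝ))).mul_isLittleO hρ
    refine base.congr' ?_ ?_
    · filter_upwards [self_mem_nhdsWithin] with u hu
      have hu0 : (0:ℝ) < u := hu
      have h23 : (0:ℝ) < u ^ ((2:ℝ)/3) := Real.rpow_pos_of_pos hu0 _
      have key1 : u ^ ((2:ℝ)/3) * |ee γ 1 2 u / u ^ ((2:ℝ))| ^ ((1:ℝ)/3)
          = |ee γ 1 2 u| ^ ((1:ℝ)/3) := by
        rw [abs_div, abs_of_nonneg (Real.rpow_nonneg hu0.le _),
          Real.div_rpow (abs_nonneg _) (Real.rpow_nonneg hu0.le _),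
          ← Real.rpow_mul hu0.le, show ((2:ℝ)*((1:ℝ)/3)) = (2:ℝ)/3 by norm_num]
        field_simp
      have key2 : u ^ ((2:ℝ)/3) * u = u ^ ((5:ℝ)/3) := by
        rw [show ((5:ℝ)/3) = (2:ℝ)/3 + 1 by norm_num, Real.rpow_add hu0, Real.rpow_one]
      rw [← key1, ← key2]
      ring
    · filter_upwards [self_mem_nhdsWithin] with u hu
      have hu0 : (0:ℝ) < u := hu
      rw [show ((5:ℝ)/3) = (2:ℝ)/3 + 1 by norm_num, Real.rpow_add hu0, Real.rpow_one]
  have hint := aux_int_littleO hψcont (by norm_num : (0:ℝ) ≤ 5/3) hψ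
  have hsAeq : ∀ t : ℝ, sA γ t - (3/5*m*t^((5:ℝ)/3) + 3/8*q*t^((5:ℝ)/3+1))
      = ∫ u in (0:ℝ)..t, (|ee γ 1 2 u| ^ ((1:ℝ)/3) - (m*u^((2:ℝ)/3) + q*u^((5:ℝ)/3))) := by
    intro t
    have hI1 : IntervalIntegrable (fun u : ℝ => |ee γ 1 2 u| ^ ((1:ℝ)/3)) volume 0 t :=
      hEcont13.intervalIntegrable _ _
    have hI2a : IntervalIntegrable (fun u : ℝ => m*u^((2:ℝ)/3)) volume 0 t :=
      (intervalIntegral.intervalIntegrable_rpow' (by norm_num)).const_mul m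
    have hI2b : IntervalIntegrable (fun u : ℝ => q*u^((5:ℝ)/3)) volume 0 t :=
      (intervalIntegral.intervalIntegrable_rpow' (by norm_num)).const_mul q
    rw [intervalIntegral.integral_sub hI1 (hI2a.add hI2b)]
    have h1 : sA γ t = ∫ u in (0:ℝ)..t, |ee γ 1 2 u| ^ ((1:ℝ)/3) := by
      unfold sA ee
      congr 1
      funext u
      rw [iteratedDeriv_one]
    have h2 : (∫ u in (0:ℝ)..t, (m*u^((2:ℝ)/3) + q*u^((5:ℝ)/3)))
        = 3/5*m*t^((5:ℝ)/3) + 3/8*q*t^((5:ℝ)/3+1) := by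
      rw [intervalIntegral.integral_add hI2a hI2b, intervalIntegral.integral_const_mul,
        intervalIntegral.integral_const_mul, integral_rpow (Or.inl (by norm_num)),
        integral_rpow (Or.inl (by norm_num)), Real.zero_rpow (by norm_num),
        Real.zero_rpow (by norm_num), show ((2:ℝ)/3+1) = (5:ℝ)/3 by norm_num]
      try ring
    rw [h1, h2]
    try ring
  have hsAo : (fun t => sA γ t - (3/5*m*t^((5:ℝ)/3) + 3/8*q*t^((5:ℝ)/3+1)))
      =o[𝓝[>] (0:ℝ)] fun t => t^((5:ℝ)/3+1) :=
    hint.congr (fun t => (hsAeq t).symm) (fun _ => rfl)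
  have hS : exp1 (fun t => sA γ t / t^((5:ℝ)/3)) (3/5*m) (3/8*q) :=
    exp1_div_rpow (by norm_num) hsAo
  -- assemble the product
  have hIv := ((exp1_const 9).mul hW).comp
    (hasDerivAt_inv (x := 9*m^(8:ℕ)) (ne_of_gt (mul_pos (by norm_num) (pow_pos hm0 8))))
  have hG : exp1 (fun t => sA γ t / t^((5:ℝ)/3) * (sA γ t / t^((5:ℝ)/3))
      * ((3*ee γ 1 2 t*ee γ 1 4 t + 12*ee γ 1 2 t*ee γ 2 3 t - 5*ee γ 1 3 t^2) / t ^ ((2:ℝ)))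
      * (9 * |ee γ 1 2 t / t ^ ((2:ℝ))| ^ ((8:ℝ)/3))⁻¹) (4/25) 0 := by
    refine exp1_congr (((hS.mul hS).mul hK).mul hIv) ?_ ?_
    · beta_reduce
      rw [hμm]
      rcases hsor with rfl | rfl <;> (field_simp [hm']; try ring) <;> try (left; trivial)
    · beta_reduce
      rw [hqdef, hμm]
      rcases hsor with rfl | rfl <;> (field_simp [hm']; try ring) <;> try (left; trivial)
  have hfinal : (fun t => sA γ t ^ 2 * kappaA γ t) =ᶠ[𝓝[>] (0:ℝ)]
      (fun t => sA γ t / t^((5:ℝ)/3) * (sA γ t / t^((5:ℝ)/3))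
      * ((3*ee γ 1 2 t*ee γ 1 4 t + 12*ee γ 1 2 t*ee γ 2 3 t - 5*ee γ 1 3 t^2) / t ^ ((2:ℝ)))
      * (9 * |ee γ 1 2 t / t ^ ((2:ℝ))| ^ ((8:ℝ)/3))⁻¹) := by
    filter_upwards [self_mem_nhdsWithin, hreg] with t ht hrt
    have ht0 : (0:ℝ) < t := ht
    have habs0 : (0:ℝ) < |ee γ 1 2 t| := abs_pos.2 hrt
    have hkap : kappaA γ t = (3*ee γ 1 2 t*ee γ 1 4 t + 12*ee γ 1 2 t*ee γ 2 3 t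
        - 5*ee γ 1 3 t^2) / (9*|ee γ 1 2 t|^((8:ℝ)/3)) := by
      unfold kappaA ee
      rw [iteratedDeriv_one]
    have hT2 : (0:ℝ) < t ^ ((2:ℝ)) := Real.rpow_pos_of_pos ht0 _
    have hT53 : (0:ℝ) < t ^ ((5:ℝ)/3) := Real.rpow_pos_of_pos ht0 _
    have hR : (0:ℝ) < |ee γ 1 2 t| ^ ((8:ℝ)/3) := Real.rpow_pos_of_pos habs0 _
    have hsplit : |ee γ 1 2 t / t ^ ((2:ℝ))| ^ ((8:ℝ)/3)
        = |ee γ 1 2 t| ^ ((8:ℝ)/3) / t ^ ((16:ℝ)/3) := by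
      rw [abs_div, abs_of_nonneg (Real.rpow_nonneg ht0.le _),
        Real.div_rpow (abs_nonneg _) (Real.rpow_nonneg ht0.le _),
        ← Real.rpow_mul ht0.le, show ((2:ℝ)*((8:ℝ)/3)) = (16:ℝ)/3 by norm_num]
    have hpowid : t ^ ((16:ℝ)/3) = t ^ ((5:ℝ)/3) * t ^ ((5:ℝ)/3) * t ^ ((2:ℝ)) := by
      rw [← Real.rpow_add ht0, ← Real.rpow_add ht0]
      norm_num
    rw [hkap, hsplit, hpowid]
    field_simp
    try ring
    try (left; trivial)
  constructor
  · exact Filter.Tendsto.congr' hfinal.symm hG.1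
  · exact Filter.Tendsto.congr' (hfinal.symm.mono (fun t h => by rw [h])) hG.2

/-- At a 3/2-cusp, the `C^∞` extension `F` of `(s_A)²·κ_A` satisfies `F(0) = 4/25`
and `F'(0) = 0`. -/
theorem stmt_8 (γ : ℝ → ℝ × ℝ) (hγ : ContDiff ℝ (⊤:ℕ∞) γ) (hcusp : HasCusp γ)
    (hreg : ∀ᶠ t in 𝓝[≠] (0:ℝ), det2 (deriv γ t) (iteratedDeriv 2 γ t) ≠ 0)
    (F : ℝ → ℝ) (ε : ℝ) (hε : 0 < ε)
    (hF : ContDiffOn ℝ (⊤:ℕ∞) F (Set.Ioo (-ε) ε))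
    (hFeq : ∀ t ∈ Set.Ioo (-ε) ε, t ≠ 0 → F t = sA γ t ^ 2 * kappaA γ t) :
    F 0 = 4 / 25 ∧ deriv F 0 = 0 := by
  obtain ⟨hc0, hμ0⟩ := hcusp
  have h10 : iteratedDeriv 1 γ 0 = 0 := by rw [iteratedDeriv_one]; exact hc0
  have hμ : ee γ 2 3 0 ≠ 0 := hμ0
  have hsub : 𝓝[>] (0:ℝ) ≤ 𝓝[≠] (0:ℝ) := nhdsWithin_mono _ (fun x hx => ne_of_gt hx)
  have hreg' : ∀ᶠ t in 𝓝[>] (0:ℝ), ee γ 1 2 t ≠ 0 := by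
    filter_upwards [hreg.filter_mono hsub] with t ht
    unfold ee
    rw [iteratedDeriv_one]
    exact ht
  obtain ⟨hlim0, hlim1⟩ := aux_key γ hγ h10 hμ hreg'
  have hopen : Set.Ioo (-ε) ε ∈ 𝓝 (0:ℝ) := Ioo_mem_nhds (by linarith) hε
  have hFev : (fun t => sA γ t ^ 2 * kappaA γ t) =ᶠ[𝓝[>] (0:ℝ)] F := by
    filter_upwards [self_mem_nhdsWithin, mem_nhdsWithin_of_mem_nhds hopen] with t ht htm
    exact (hFeq t htm (ne_of_gt ht)).symm
  have hFlim : Filter.Tendsto F (𝓝[>] (0:ℝ)) (𝓝 (4/25)) := hlim0.congr' hFev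
  have hFcont : ContinuousAt F 0 := hF.continuousOn.continuousAt hopen
  have hF0 : F 0 = 4/25 := by
    have h1 : Filter.Tendsto F (𝓝[>] (0:ℝ)) (𝓝 (F 0)) :=
      hFcont.tendsto.mono_left nhdsWithin_le_nhds
    exact tendsto_nhds_unique h1 hFlim
  refine ⟨hF0, ?_⟩
  have hdiffF : DifferentiableAt ℝ F 0 := by
    have h1 : DifferentiableOn ℝ F (Set.Ioo (-ε) ε) := hF.differentiableOn (by simp)
    exact h1.differentiableAt hopen
  have hslope : Filter.Tendsto (fun t => (F t - F 0)/t) (𝓝[>] (0:ℝ)) (𝓝 (deriv F 0)) := by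
    have h1 := hasDerivAt_iff_tendsto_slope.1 hdiffF.hasDerivAt
    have h2 := h1.mono_left (nhdsWithin_mono _ (fun x (hx : x ∈ Set.Ioi (0:ℝ)) => ne_of_gt hx))
    refine h2.congr' ?_
    filter_upwards with t
    rw [slope_def_field]
    rw [sub_zero]
  have h3 : Filter.Tendsto (fun t => (F t - F 0)/t) (𝓝[>] (0:ℝ)) (𝓝 0) := by
    rw [hF0]
    refine hlim1.congr' ?_
    refine hFev.mono (fun t h => ?_)
    have h' : sA γ t ^ 2 * kappaA γ t = F t := h
    show (sA γ t ^ 2 * kappaA γ t - 4/25)/t = (F t - 4/25)/t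
    rw [h']
  exact tendsto_nhds_unique hslope h3
end
end

section
/- Let f : ℝ → ℝ be a C^∞ function with f(0) = 4/25 and f'(0) = 0. Then there exists a C^∞ curve γ : (−δ, δ) → ℝ² (for some δ > 0) with a 3/2-cusp at τ = 0 such that τ is the 3/5-arclength parameter of γ (i.e. s_A(τ) = sgn(τ)·|τ|^{5/3} for all τ, equivalently [γ'(τ), γ''(τ)] = 125τ²/27) and s_A(τ)²·κ_A(τ) = f(τ) for all τ ≠ 0 near 0. -/
noncomputable section
open Real Set Filter Topology

-- AUX START
open MeasureTheory in
private def Jw (w g : ℝ → ℝ) (x : ℝ) : ℝ := ∫ t in (0:ℝ)..1, w t * g (t * x)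

open MeasureTheory in
private lemma hasDerivAt_Jw (w g : ℝ → ℝ) (hw : Continuous w) (hg : ContDiff ℝ (⊤:ℕ∞) g)
    (x₀ : ℝ) : HasDerivAt (Jw w g) (Jw (fun t => w t * t) (deriv g) x₀) x₀ := by
  have hgd : Differentiable ℝ g := hg.differentiable (by simp)
  have hg' : Continuous (deriv g) :=
    ((contDiff_infty_iff_deriv.mp hg).2).continuous
  obtain ⟨C, hC⟩ := (isCompact_Icc (a := -(|x₀|+1)) (b := |x₀|+1)).exists_bound_of_continuousOn
    hg'.continuousOn
  have key := intervalIntegral.hasDerivAt_integral_of_dominated_loc_of_deriv_le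
    (𝕜 := ℝ) (μ := volume) (a := (0:ℝ)) (b := 1) (s := Metric.ball x₀ 1)
    (bound := fun t => |w t| * C)
    (F := fun x t => w t * g (t * x)) (F' := fun x t => (w t * t) * deriv g (t * x))
    (x₀ := x₀) (Metric.ball_mem_nhds x₀ one_pos) ?_ ?_ ?_ ?_ ?_ ?_
  · exact key.2
  · filter_upwards with x
    exact (hw.mul (hgd.continuous.comp (continuous_id.mul continuous_const))).aestronglyMeasurable
  · exact ((hw.mul (hgd.continuous.comp (continuous_id.mul continuous_const)))).intervalIntegrable _ _
  · exact ((hw.mul continuous_id).mul (hg'.comp (continuous_id.mul continuous_const))).aestronglyMeasurable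
  · filter_upwards with t ht x hx
    have ht' : t ∈ Icc (0:ℝ) 1 := by
      rw [Set.uIoc_of_le (by norm_num : (0:ℝ) ≤ 1)] at ht
      exact ⟨le_of_lt ht.1, ht.2⟩
    have hb : |x| ≤ |x₀| + 1 := by
      have h1 : |x - x₀| < 1 := mem_ball_iff_norm.mp hx
      calc |x| = |x₀ + (x - x₀)| := by ring_nf
        _ ≤ |x₀| + |x - x₀| := abs_add_le _ _
        _ ≤ |x₀| + 1 := by linarith
    have htx : t * x ∈ Icc (-(|x₀|+1)) (|x₀|+1) := by
      have : |t * x| ≤ |x₀| + 1 := by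
        rw [abs_mul]
        calc |t| * |x| ≤ 1 * (|x₀|+1) := by
              apply mul_le_mul _ hb (abs_nonneg _) zero_le_one
              rw [abs_of_nonneg ht'.1]; exact ht'.2
          _ = |x₀| + 1 := one_mul _
      exact abs_le.mp this
    calc ‖w t * t * deriv g (t * x)‖ = |w t| * |t| * |deriv g (t * x)| := by
          simp [abs_mul]
      _ ≤ |w t| * 1 * C := by
          apply mul_le_mul _ (hC _ htx) (abs_nonneg _) (by positivity)
          apply mul_le_mul_of_nonneg_left _ (abs_nonneg _)
          rw [abs_of_nonneg ht'.1]; exact ht'.2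
      _ = |w t| * C := by ring
  · exact ((hw.abs).mul continuous_const).intervalIntegrable _ _
  · filter_upwards with t _ x _
    have h1 : HasDerivAt (fun x : ℝ => g (t * x)) (deriv g (t * x) * t) x := by
      have := ((hgd (t * x)).hasDerivAt).comp x ((hasDerivAt_id x).const_mul t)
      simpa [Function.comp_def] using this
    have := h1.const_mul (w t)
    convert this using 1 <;> try with_reducible_and_instances rfl
    ring

private lemma contDiff_Jw (n : ℕ) : ∀ (w g : ℝ → ℝ), Continuous w → ContDiff ℝ (⊤:ℕ∞) g →
    ContDiff ℝ (n:ℕ∞) (Jw w g) := by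
  induction n with
  | zero =>
    intro w g hw hg
    have : ContDiff ℝ 0 (Jw w g) := contDiff_zero.mpr
      (continuous_iff_continuousAt.mpr fun x => (hasDerivAt_Jw w g hw hg x).continuousAt)
    exact_mod_cast this
  | succ n ih =>
    intro w g hw hg
    have hg' : ContDiff ℝ (⊤:ℕ∞) (deriv g) := (contDiff_infty_iff_deriv.mp hg).2
    have hd : deriv (Jw w g) = Jw (fun t => w t * t) (deriv g) :=
      funext fun x => (hasDerivAt_Jw w g hw hg x).deriv
    have : ContDiff ℝ ((n:ℕ∞) + 1) (Jw w g) := by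
      rw [contDiff_succ_iff_deriv]
      refine ⟨fun x => (hasDerivAt_Jw w g hw hg x).differentiableAt, ?_, ?_⟩
      · intro h; exact absurd h (by exact_mod_cast (by simp : ((n:ℕ∞) : WithTop ℕ∞) ≠ ⊤))
      · rw [hd]; exact ih _ _ (hw.mul continuous_id) hg'
    exact_mod_cast this

/-- Hadamard division lemma -/
private lemma hadamard_div (g : ℝ → ℝ) (hg : ContDiff ℝ (⊤:ℕ∞) g) (h0 : g 0 = 0) :
    ∃ h : ℝ → ℝ, ContDiff ℝ (⊤:ℕ∞) h ∧ (∀ x, g x = x * h x) ∧ h 0 = deriv g 0 := by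
  have hgd : Differentiable ℝ g := hg.differentiable (by simp)
  have hg' : Continuous (deriv g) := ((contDiff_infty_iff_deriv.mp hg).2).continuous
  refine ⟨Jw (fun _ => 1) (deriv g), ?_, ?_, ?_⟩
  · rw [contDiff_infty]
    intro n
    exact_mod_cast contDiff_Jw n _ _ continuous_const (contDiff_infty_iff_deriv.mp hg).2
  · intro x
    have h1 : x * Jw (fun _ => 1) (deriv g) x = ∫ t in (0:ℝ)..1, x • deriv g (t * x) := by
      rw [Jw]
      simp only [one_mul, smul_eq_mul]
      rw [intervalIntegral.integral_const_mul]
    rw [h1]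
    have hsub : ∫ t in (0:ℝ)..1, x • ((deriv g) ∘ (fun t => t * x)) t
        = ∫ u in (0:ℝ)*x..(1:ℝ)*x, deriv g u := by
      apply intervalIntegral.integral_comp_smul_deriv (f := fun t => t * x)
        (f' := fun _ => x)
      · intro t _; exact hasDerivAt_mul_const x
      · exact continuousOn_const
      · exact hg'
    simp only [Function.comp] at hsub
    rw [hsub]
    simp only [zero_mul, one_mul]
    rw [intervalIntegral.integral_deriv_eq_sub (fun u _ => hgd.differentiableAt)
      (hg'.intervalIntegrable _ _), h0, sub_zero]
  · simp [Jw]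

private lemma hasDerivAt_signAbs (u : ℝ) :
    HasDerivAt (fun v : ℝ => Real.sign v * |v| ^ ((5:ℝ)/3)) ((5/3) * |u| ^ ((2:ℝ)/3)) u := by
  rcases lt_trichotomy u 0 with hu | hu | hu
  · have h1 : HasDerivAt (fun v : ℝ => -((-v) ^ ((5:ℝ)/3))) ((5/3) * (-u) ^ ((2:ℝ)/3)) u := by
      have h2 : HasDerivAt (fun v : ℝ => (-v) ^ ((5:ℝ)/3))
          (((5:ℝ)/3 * (-u) ^ ((5:ℝ)/3 - 1)) * (-1)) u :=
        (Real.hasDerivAt_rpow_const (x := -u) (p := (5:ℝ)/3)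
          (Or.inl (by linarith))).comp u (hasDerivAt_neg u)
      have := h2.fun_neg
      convert this using 1 <;> first | rfl | norm_num
    apply h1.congr_of_eventuallyEq ?_ |>.congr_deriv ?_
    · filter_upwards [eventually_lt_nhds hu] with v hv
      rw [Real.sign_of_neg hv, abs_of_neg hv]; ring
    · rw [abs_of_neg hu]
  · subst hu
    rw [hasDerivAt_iff_tendsto_slope]
    have habs : Filter.Tendsto (fun v : ℝ => |v| ^ ((2:ℝ)/3)) (nhdsWithin 0 {(0:ℝ)}ᶜ) (nhds 0) := by
      have h2 : Filter.Tendsto (fun v : ℝ => |v| ^ ((2:ℝ)/3)) (nhds 0) (nhds (|(0:ℝ)| ^ ((2:ℝ)/3))) := by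
        apply Continuous.tendsto
        exact continuous_abs.rpow_const (fun x => Or.inr (by norm_num))
      simp only [abs_zero, Real.zero_rpow (by norm_num : ((2:ℝ)/3) ≠ 0)] at h2
      exact h2.mono_left nhdsWithin_le_nhds
    have h0 : ((5:ℝ)/3) * |(0:ℝ)| ^ ((2:ℝ)/3) = 0 := by
      simp [Real.zero_rpow (by norm_num : ((2:ℝ)/3) ≠ 0)]
    rw [h0]
    apply habs.congr'
    filter_upwards [self_mem_nhdsWithin] with v hv
    have hv' : v ≠ 0 := hv
    rw [slope_def_field]
    simp only [Real.sign_zero, abs_zero, zero_mul,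
      Real.zero_rpow (by norm_num : ((5:ℝ)/3) ≠ 0), mul_zero, sub_zero, zero_sub, sub_zero]
    rcases lt_or_gt_of_ne hv' with h | h
    · rw [Real.sign_of_neg h, abs_of_neg h]
      rw [show (5:ℝ)/3 = 2/3 + 1 by norm_num, Real.rpow_add (by linarith : (0:ℝ) < -v),
        Real.rpow_one]
      field_simp
    · rw [Real.sign_of_pos h, abs_of_pos h]
      rw [show (5:ℝ)/3 = 2/3 + 1 by norm_num, Real.rpow_add h, Real.rpow_one]
      field_simp
  · have h1 : HasDerivAt (fun v : ℝ => v ^ ((5:ℝ)/3)) ((5:ℝ)/3 * u ^ ((5:ℝ)/3 - 1)) u :=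
      Real.hasDerivAt_rpow_const (Or.inl (ne_of_gt hu))
    apply h1.congr_of_eventuallyEq ?_ |>.congr_deriv ?_
    · filter_upwards [eventually_gt_nhds hu] with v hv
      rw [Real.sign_of_pos hv, abs_of_pos hv]; ring
    · rw [abs_of_pos hu]; norm_num

private lemma const_on_Ioo {E : Type*} [NormedAddCommGroup E] [NormedSpace ℝ E]
    {d : ℝ → E} {ε : ℝ} (hd : ∀ t ∈ Ioo (-ε) ε, HasDerivAt d 0 t)
    {τ : ℝ} (hτ : τ ∈ Ioo (-ε) ε) (h0 : (0:ℝ) ∈ Ioo (-ε) ε) : d τ = d 0 := by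
  rcases le_total 0 τ with h | h
  · have hsub : Icc (0:ℝ) τ ⊆ Ioo (-ε) ε := fun x hx =>
      ⟨lt_of_lt_of_le h0.1 hx.1, lt_of_le_of_lt hx.2 hτ.2⟩
    have := constant_of_has_deriv_right_zero (f := d) (a := 0) (b := τ)
      (fun x hx => ((hd x (hsub hx)).differentiableAt.continuousAt).continuousWithinAt)
      (fun x hx => ((hd x (hsub (Ico_subset_Icc_self hx))).hasDerivWithinAt))
    exact this τ (right_mem_Icc.mpr h)
  · have hsub : Icc τ (0:ℝ) ⊆ Ioo (-ε) ε := fun x hx =>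
      ⟨lt_of_lt_of_le hτ.1 hx.1, lt_of_le_of_lt hx.2 h0.2⟩
    have := constant_of_has_deriv_right_zero (f := d) (a := τ) (b := 0)
      (fun x hx => ((hd x (hsub hx)).differentiableAt.continuousAt).continuousWithinAt)
      (fun x hx => ((hd x (hsub (Ico_subset_Icc_self hx))).hasDerivWithinAt))
    exact (this 0 (right_mem_Icc.mpr h)).symm

private lemma HasDerivAt.fst' {E F : Type*} [NormedAddCommGroup E] [NormedSpace ℝ E]
    [NormedAddCommGroup F] [NormedSpace ℝ F]
    {f : ℝ → E × F} {v : E × F} {t : ℝ} (h : HasDerivAt f v t) :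
    HasDerivAt (fun t => (f t).1) v.1 t :=
  (hasFDerivAt_fst (p := f t)).comp_hasDerivAt t h

private lemma HasDerivAt.snd' {E F : Type*} [NormedAddCommGroup E] [NormedSpace ℝ E]
    [NormedAddCommGroup F] [NormedSpace ℝ F]
    {f : ℝ → E × F} {v : E × F} {t : ℝ} (h : HasDerivAt f v t) :
    HasDerivAt (fun t => (f t).2) v.2 t :=
  (hasFDerivAt_snd (p := f t)).comp_hasDerivAt t h
-- AUX END

/-- Realization: for any smooth `f` with `f(0) = 4/25` and `f'(0) = 0`, there is a
3/2-cusp, parametrized by its 3/5-arclength parameter, whose normalized affine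
curvature function is `f`. -/
theorem stmt_10 (f : ℝ → ℝ) (hf : ContDiff ℝ (⊤:ℕ∞) f)
    (hf0 : f 0 = 4/25) (hf'0 : deriv f 0 = 0) :
    ∃ δ > (0:ℝ), ∃ γ : ℝ → ℝ × ℝ,
      ContDiffOn ℝ (⊤:ℕ∞) γ (Set.Ioo (-δ) δ) ∧ HasCusp γ ∧
      (∀ τ ∈ Set.Ioo (-δ) δ, sA γ τ = Real.sign τ * |τ| ^ ((5:ℝ)/3)) ∧
      (∀ τ ∈ Set.Ioo (-δ) δ, det2 (deriv γ τ) (iteratedDeriv 2 γ τ) = 125 * τ ^ 2 / 27) ∧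
      (∀ τ ∈ Set.Ioo (-δ) δ, τ ≠ 0 → sA γ τ ^ 2 * kappaA γ τ = f τ) := by
  -- Step 1: Hadamard division, twice
  have hk : ContDiff ℝ (⊤:ℕ∞) (fun τ => 4 - 25 * f τ) :=
    contDiff_const.sub (contDiff_const.mul hf)
  have hk0 : (fun τ : ℝ => 4 - 25 * f τ) 0 = 0 := by simp only [hf0]; ring
  obtain ⟨h₁, hh₁, hkh₁, hh₁0⟩ := hadamard_div _ hk hk0
  have hdk : deriv (fun τ => 4 - 25 * f τ) 0 = 0 := by
    have hfd : HasDerivAt f (deriv f 0) 0 :=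
      ((hf.differentiable (by simp)) 0).hasDerivAt
    have hd2 : HasDerivAt (fun τ => 4 - 25 * f τ) (-(25 * deriv f 0)) 0 :=
      (hfd.const_mul 25).const_sub 4
    rw [hd2.deriv, hf'0]; ring
  obtain ⟨h, hh, hh₁h, -⟩ := hadamard_div h₁ hh₁ (hh₁0.trans hdk)
  have hkey : ∀ τ : ℝ, τ^2 * h τ = 4 - 25 * f τ := by
    intro τ
    have e1 := hkh₁ τ
    have e2 := hh₁h τ
    try simp only at e1
    linear_combination (-1 : ℝ) * e1 - τ * e2
  have hhd : Differentiable ℝ h := hh.differentiable (by simp)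
  -- Step 2: solve the ODE
  have hVtop : ContDiff ℝ (⊤:ℕ∞)
      (fun x : ℝ × ((ℝ × ℝ) × ((ℝ × ℝ) × (ℝ × ℝ))) =>
        ((1:ℝ), ((5/3 * x.1) • x.2.2.1, (x.2.2.2, (h x.1 / 9) • x.2.2.1)))) := by
    refine contDiff_const.prodMk (ContDiff.prodMk ?_ (ContDiff.prodMk ?_ ?_))
    · exact (contDiff_const.mul contDiff_fst).smul contDiff_snd.snd.fst
    · exact contDiff_snd.snd.snd
    · exact ((hh.comp contDiff_fst).div_const 9).smul contDiff_snd.snd.fst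
  obtain ⟨F, hF0, ε, hε, hFd⟩ := ContDiffAt.exists_forall_mem_closedBall_exists_eq_forall_mem_Ioo_hasDerivAt₀
    (x₀ := ((0:ℝ), (((0:ℝ),(0:ℝ)), (((1:ℝ),(0:ℝ)), ((0:ℝ),(5:ℝ)/3)))))
    (hVtop.of_le (by simp)).contDiffAt 0
  have hF' : ∀ t ∈ Ioo (-ε) ε, HasDerivAt F
      ((1:ℝ), ((5/3 * (F t).1) • (F t).2.2.1, ((F t).2.2.2, (h (F t).1 / 9) • (F t).2.2.1))) t := by
    intro t ht
    exact hFd t (by simpa using ht)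
  have h0mem : (0:ℝ) ∈ Ioo (-ε) ε := ⟨by linarith, hε⟩
  -- smoothness bootstrap
  have hFn : ∀ n : ℕ, ContDiffOn ℝ (n:ℕ∞) F (Ioo (-ε) ε) := by
    intro n
    induction n with
    | zero =>
      have hco : ContinuousOn F (Ioo (-ε) ε) :=
        fun x hx => ((hF' x hx).differentiableAt.continuousAt).continuousWithinAt
      exact_mod_cast contDiffOn_zero.mpr hco
    | succ n ih =>
      have h1 : ContDiffOn ℝ ((n:ℕ∞)+1) F (Ioo (-ε) ε) := by
        rw [contDiffOn_succ_iff_deriv_of_isOpen isOpen_Ioo]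
        refine ⟨fun x hx => (hF' x hx).differentiableAt.differentiableWithinAt, ?_, ?_⟩
        · intro hcontra
          exact absurd hcontra (by exact_mod_cast (by simp : ((n:ℕ∞) : WithTop ℕ∞) ≠ ⊤))
        · exact ((hVtop.of_le (mod_cast le_top)).comp_contDiffOn ih).congr
            (fun x hx => (hF' x hx).deriv)
      exact_mod_cast h1
  have hFtop : ContDiffOn ℝ (⊤:ℕ∞) F (Ioo (-ε) ε) :=
    contDiffOn_infty.mpr (fun n => by exact_mod_cast hFn n)
  -- components
  set γ : ℝ → ℝ × ℝ := fun t => (F t).2.1 with hγdef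
  set P : ℝ → ℝ × ℝ := fun t => (F t).2.2.1 with hPdef
  set Q : ℝ → ℝ × ℝ := fun t => (F t).2.2.2 with hQdef
  have hc1 : ∀ t ∈ Ioo (-ε) ε, HasDerivAt (fun u => (F u).1) 1 t :=
    fun t ht => (hF' t ht).fst'
  have hct : ∀ t ∈ Ioo (-ε) ε, (F t).1 = t := by
    intro t ht
    have hd0 : ∀ u ∈ Ioo (-ε) ε, HasDerivAt (fun v => (F v).1 - v) 0 u := by
      intro u hu
      simpa using ((hc1 u hu).fun_sub (hasDerivAt_id u))
    have hcc := const_on_Ioo hd0 ht h0mem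
    rw [hF0] at hcc
    simp at hcc
    linarith
  have hγ2 : ∀ t ∈ Ioo (-ε) ε, HasDerivAt γ ((5/3 * t) • P t) t := by
    intro t ht
    have := (hF' t ht).snd'.fst'
    rw [hct t ht] at this
    exact this
  have hP' : ∀ t ∈ Ioo (-ε) ε, HasDerivAt P (Q t) t :=
    fun t ht => (hF' t ht).snd'.snd'.fst'
  have hQ2 : ∀ t ∈ Ioo (-ε) ε, HasDerivAt Q ((h t / 9) • P t) t := by
    intro t ht
    have := (hF' t ht).snd'.snd'.snd'
    rw [hct t ht] at this
    exact this
  -- Wronskian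
  have hWd : ∀ t ∈ Ioo (-ε) ε, HasDerivAt (fun u => det2 (P u) (Q u)) 0 t := by
    intro t ht
    have h1 := ((hP' t ht).fst'.mul (hQ2 t ht).snd').sub ((hP' t ht).snd'.mul (hQ2 t ht).fst')
    simp only [det2]
    convert h1 using 1 <;> try with_reducible_and_instances rfl
    simp only [Prod.smul_fst, Prod.smul_snd, smul_eq_mul]
    ring
  have hW : ∀ t ∈ Ioo (-ε) ε, det2 (P t) (Q t) = 5/3 := by
    intro t ht
    have hcc := const_on_Ioo hWd ht h0mem
    rw [hcc]
    simp only [hPdef, hQdef, hF0, det2]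
    norm_num
  -- derivative chain
  have hg1' : ∀ t ∈ Ioo (-ε) ε, HasDerivAt (fun u => (5/3 * u) • P u)
      (((5:ℝ)/3) • P t + (5/3 * t) • Q t) t := by
    intro t ht
    have h1 := ((hasDerivAt_id t).const_mul ((5:ℝ)/3)).smul (hP' t ht)
    simp only [id_eq] at h1
    convert h1 using 1 <;> try with_reducible_and_instances rfl
    rw [Prod.ext_iff]
    constructor <;>
      simp only [Prod.smul_fst, Prod.smul_snd, Prod.fst_add, Prod.snd_add, smul_eq_mul] <;>
      ring
  have hg2' : ∀ t ∈ Ioo (-ε) ε, HasDerivAt (fun u => ((5:ℝ)/3) • P u + (5/3 * u) • Q u)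
      (((10:ℝ)/3) • Q t + (5/3 * t * (h t / 9)) • P t) t := by
    intro t ht
    have hA := (hP' t ht).const_smul ((5:ℝ)/3)
    have hB := ((hasDerivAt_id t).const_mul ((5:ℝ)/3)).smul (hQ2 t ht)
    have h1 := hA.add hB
    simp only [id_eq] at h1
    convert h1 using 1 <;> try with_reducible_and_instances rfl
    rw [Prod.ext_iff]
    constructor <;>
      simp only [Prod.smul_fst, Prod.smul_snd, Prod.fst_add, Prod.snd_add, smul_eq_mul] <;>
      ring
  have hg3' : ∀ t ∈ Ioo (-ε) ε, HasDerivAt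
      (fun u => ((10:ℝ)/3) • Q u + (5/3 * u * (h u / 9)) • P u)
      ((5 * (3 * h t + t * deriv h t) / 27) • P t + (5 * t * h t / 27) • Q t) t := by
    intro t ht
    have hA := (hQ2 t ht).const_smul ((10:ℝ)/3)
    have hhd' : HasDerivAt h (deriv h t) t := (hhd t).hasDerivAt
    have hs := ((hasDerivAt_id t).const_mul ((5:ℝ)/3)).mul (hhd'.div_const 9)
    have hB := hs.smul (hP' t ht)
    have h1 := hA.add hB
    simp only [id_eq] at h1
    convert h1 using 1 <;> try with_reducible_and_instances rfl
    rw [Prod.ext_iff]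
    constructor <;>
      simp only [Prod.smul_fst, Prod.smul_snd, Prod.fst_add, Prod.snd_add, smul_eq_mul, Pi.mul_apply] <;>
      ring
  -- iterated derivatives of γ
  have hd1 : ∀ t ∈ Ioo (-ε) ε, deriv γ t = (5/3 * t) • P t :=
    fun t ht => (hγ2 t ht).deriv
  have hev1 : ∀ t ∈ Ioo (-ε) ε, deriv γ =ᶠ[nhds t] (fun u => (5/3 * u) • P u) := by
    intro t ht
    filter_upwards [isOpen_Ioo.mem_nhds ht] with u hu
    exact hd1 u hu
  have hd2 : ∀ t ∈ Ioo (-ε) ε,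
      iteratedDeriv 2 γ t = ((5:ℝ)/3) • P t + (5/3 * t) • Q t := by
    intro t ht
    have e2 : iteratedDeriv 2 γ t = deriv (iteratedDeriv 1 γ) t :=
      congrFun (iteratedDeriv_succ (n := 1)) t
    rw [e2, iteratedDeriv_one, (hev1 t ht).deriv_eq]
    exact (hg1' t ht).deriv
  have hev2 : ∀ t ∈ Ioo (-ε) ε,
      iteratedDeriv 2 γ =ᶠ[nhds t] (fun u => ((5:ℝ)/3) • P u + (5/3 * u) • Q u) := by
    intro t ht
    filter_upwards [isOpen_Ioo.mem_nhds ht] with u hu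
    exact hd2 u hu
  have hd3 : ∀ t ∈ Ioo (-ε) ε,
      iteratedDeriv 3 γ t = ((10:ℝ)/3) • Q t + (5/3 * t * (h t / 9)) • P t := by
    intro t ht
    have e3 : iteratedDeriv 3 γ t = deriv (iteratedDeriv 2 γ) t :=
      congrFun (iteratedDeriv_succ (n := 2)) t
    rw [e3, (hev2 t ht).deriv_eq]
    exact (hg2' t ht).deriv
  have hev3 : ∀ t ∈ Ioo (-ε) ε,
      iteratedDeriv 3 γ =ᶠ[nhds t]
        (fun u => ((10:ℝ)/3) • Q u + (5/3 * u * (h u / 9)) • P u) := by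
    intro t ht
    filter_upwards [isOpen_Ioo.mem_nhds ht] with u hu
    exact hd3 u hu
  have hd4 : ∀ t ∈ Ioo (-ε) ε,
      iteratedDeriv 4 γ t
        = (5 * (3 * h t + t * deriv h t) / 27) • P t + (5 * t * h t / 27) • Q t := by
    intro t ht
    have e4 : iteratedDeriv 4 γ t = deriv (iteratedDeriv 3 γ) t :=
      congrFun (iteratedDeriv_succ (n := 3)) t
    rw [e4, (hev3 t ht).deriv_eq]
    exact (hg3' t ht).deriv
  -- determinant value
  have hdet : ∀ t ∈ Ioo (-ε) ε,
      det2 ((5/3 * t) • P t) (((5:ℝ)/3) • P t + (5/3 * t) • Q t) = 125 * t^2 / 27 := by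
    intro t ht
    have hw := hW t ht
    simp only [det2, Prod.smul_fst, Prod.smul_snd, Prod.fst_add, Prod.snd_add,
      smul_eq_mul] at hw ⊢
    linear_combination (25/9 * t^2) * hw
  have hsAv : ∀ τ ∈ Ioo (-ε) ε, sA γ τ = Real.sign τ * |τ| ^ ((5:ℝ)/3) := by
    intro τ hτ
    have hsub : uIcc 0 τ ⊆ Ioo (-ε) ε := by
      intro x hx
      rcases Set.mem_uIcc.mp hx with ⟨h1, h2⟩ | ⟨h1, h2⟩
      · exact ⟨by linarith [h0mem.1], by linarith [hτ.2]⟩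
      · exact ⟨by linarith [hτ.1], by linarith [h0mem.2]⟩
    have hEq : Set.EqOn (fun u => |det2 (deriv γ u) (iteratedDeriv 2 γ u)| ^ ((1:ℝ)/3))
        (fun u => (5:ℝ)/3 * |u| ^ ((2:ℝ)/3)) (uIcc 0 τ) := by
      intro u hu
      have hu' := hsub hu
      simp only
      rw [hd1 u hu', hd2 u hu', hdet u hu']
      rw [abs_of_nonneg (by positivity),
        show (125 * u^2 / 27 : ℝ) = (125/27) * |u|^(2:ℕ) by rw [sq_abs]; ring,
        Real.mul_rpow (by norm_num) (by positivity),
        ← Real.rpow_natCast |u| 2, ← Real.rpow_mul (abs_nonneg u),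
        show ((125:ℝ)/27) = ((5:ℝ)/3)^(3:ℕ) by norm_num,
        ← Real.rpow_natCast ((5:ℝ)/3) 3, ← Real.rpow_mul (by norm_num : (0:ℝ) ≤ 5/3)]
      norm_num
    rw [sA, intervalIntegral.integral_congr hEq,
      intervalIntegral.integral_eq_sub_of_hasDerivAt
        (f := fun v => Real.sign v * |v| ^ ((5:ℝ)/3)) (fun u _ => hasDerivAt_signAbs u)
        ((continuous_const.mul (continuous_abs.rpow_const
          (fun x => Or.inr (by norm_num)))).intervalIntegrable _ _)]
    simp
  -- conclusion
  refine ⟨ε, hε, γ, ?_, ?_, ?_, ?_, ?_⟩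
  · -- smoothness of γ
    exact (contDiff_fst.comp contDiff_snd).comp_contDiffOn hFtop
  · -- cusp
    constructor
    · rw [hd1 0 h0mem]; simp
    · rw [hd2 0 h0mem, hd3 0 h0mem]
      refine ne_of_eq_of_ne ?_ (by norm_num : (250:ℝ)/27 ≠ 0)
      have hw := hW 0 h0mem
      simp only [det2, Prod.smul_fst, Prod.smul_snd, Prod.fst_add, Prod.snd_add,
        smul_eq_mul] at hw ⊢
      linear_combination (50/9 : ℝ) * hw
  · exact hsAv
  · -- det2 condition
    intro τ hτ
    rw [hd1 τ hτ, hd2 τ hτ]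
    exact hdet τ hτ
  · -- curvature condition
    intro τ hτ hτ0
    have habs : (0:ℝ) < |τ| := abs_pos.mpr hτ0
    rw [hsAv τ hτ]
    simp only [kappaA]
    rw [hd1 τ hτ, hd2 τ hτ, hd3 τ hτ, hd4 τ hτ, hdet τ hτ]
    have hnum : 3 * (125 * τ^2/27) * det2 ((5/3 * τ) • P τ)
          ((5 * (3 * h τ + τ * deriv h τ) / 27) • P τ + (5 * τ * h τ / 27) • Q τ)
        + 12 * (125 * τ^2/27) * det2 (((5:ℝ)/3) • P τ + (5/3 * τ) • Q τ)
          (((10:ℝ)/3) • Q τ + (5/3 * τ * (h τ / 9)) • P τ)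
        - 5 * det2 ((5/3 * τ) • P τ)
            (((10:ℝ)/3) • Q τ + (5/3 * τ * (h τ / 9)) • P τ) ^ 2
        = 390625/729 * (τ^2 * f τ) := by
      have hw := hW τ hτ
      have hk2 := hkey τ
      simp only [det2, Prod.smul_fst, Prod.smul_snd, Prod.fst_add, Prod.snd_add,
        smul_eq_mul] at hw ⊢
      linear_combination ((125 * τ^2/27) * (600/9 - 225/81 * τ^2 * h τ)
        - 12500/81 * τ^2 * ((P τ).1 * (Q τ).2 - (P τ).2 * (Q τ).1 + 5/3)) * hw
        + (-(15625:ℝ)/729 * τ^2) * hk2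
    rw [hnum]
    have hden : |125 * τ^2 / 27| ^ ((8:ℝ)/3) = 390625/6561 * (|τ| ^ ((10:ℝ)/3) * τ^2) := by
      rw [abs_of_nonneg (by positivity),
        show (125 * τ^2 / 27 : ℝ) = (125/27) * |τ|^(2:ℕ) by rw [sq_abs]; ring,
        Real.mul_rpow (by norm_num) (by positivity),
        ← Real.rpow_natCast |τ| 2, ← Real.rpow_mul (abs_nonneg τ),
        show ((2:ℕ):ℝ) * ((8:ℝ)/3) = 10/3 + 2 by push_cast; norm_num,
        Real.rpow_add habs,
        show ((2:ℝ)) = ((2:ℕ):ℝ) by norm_num, Real.rpow_natCast, sq_abs,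
        show ((125:ℝ)/27) = ((5:ℝ)/3)^(3:ℕ) by norm_num,
        ← Real.rpow_natCast ((5:ℝ)/3) 3, ← Real.rpow_mul (by norm_num : (0:ℝ) ≤ 5/3),
        show ((3:ℕ):ℝ) * ((8:ℝ)/3) = ((8:ℕ):ℝ) by push_cast; norm_num,
        Real.rpow_natCast]
      norm_num
    rw [hden]
    have hsq : (Real.sign τ * |τ| ^ ((5:ℝ)/3)) ^ 2 = |τ| ^ ((10:ℝ)/3) := by
      rw [mul_pow]
      have hs1 : Real.sign τ ^ 2 = 1 := by
        rcases lt_or_gt_of_ne hτ0 with h' | h'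
        · rw [Real.sign_of_neg h']; norm_num
        · rw [Real.sign_of_pos h']; norm_num
      rw [hs1, one_mul, ← Real.rpow_natCast (|τ| ^ ((5:ℝ)/3)) 2,
        ← Real.rpow_mul (abs_nonneg τ)]
      norm_num
    rw [hsq]
    have h10 : |τ| ^ ((10:ℝ)/3) ≠ 0 := ne_of_gt (Real.rpow_pos_of_pos habs _)
    field_simp
    ring
end
end

section
/- Let γ₁, γ₂ : ℝ → ℝ² be C^∞ regular curves, each with a positive generic inflection point at t = 0. Then γ₁ and γ₂ have the same affine inflectional curvature μ_I at t = 0 if and only if there exist an orientation preserving equi-affine transformation T of ℝ² and a C^∞ change of parameter u = u(t) near t = 0 with u(0) = 0 and du/dt > 0 such that T(γ₂(u(t))) − γ₁(t) has order higher than t⁴ at t = 0. -/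
noncomputable section
open Real Set Filter Topology

section Aux
open Filter Topology Set

variable {E : Type*} [NormedAddCommGroup E] [NormedSpace ℝ E]

theorem taylor_littleO (n : ℕ) {s : Set ℝ} (hs : IsOpen s) (h0 : (0:ℝ) ∈ s) :
    ∀ (f : ℝ → E), ContDiffOn ℝ (⊤:ℕ∞) f s →
    Tendsto (fun t : ℝ => (t^n)⁻¹ • (f t - ∑ k ∈ Finset.range (n+1),
      ((Nat.factorial k : ℝ)⁻¹ * t^k) • iteratedDerivWithin k f s 0)) (𝓝[≠] (0:ℝ)) (𝓝 0) := by
  induction n with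
  | zero =>
    intro f hf
    simp only [pow_zero, inv_one, one_smul, Finset.range_one, Finset.sum_singleton,
      Nat.factorial_zero, Nat.cast_one, inv_one, pow_zero, one_mul, iteratedDerivWithin_zero]
    have hc : ContinuousAt f 0 := (hf.continuousOn.continuousAt (hs.mem_nhds h0))
    have h2 : Tendsto f (𝓝[≠] (0:ℝ)) (𝓝 (f 0)) := hc.tendsto.mono_left nhdsWithin_le_nhds
    have := h2.sub (tendsto_const_nhds (x := f 0))
    simpa using this
  | succ n ih =>
    intro f hf
    have hu : UniqueDiffOn ℝ s := hs.uniqueDiffOn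
    set g := derivWithin f s with hg
    have hgs : ContDiffOn ℝ (⊤:ℕ∞) g s := hf.derivWithin hu (by exact_mod_cast le_top)
    have hr := ih g hgs
    set r := fun t : ℝ => g t - ∑ k ∈ Finset.range (n+1),
      ((Nat.factorial k : ℝ)⁻¹ * t^k) • iteratedDerivWithin k g s 0 with hrdef
    set F := fun t : ℝ => f t - ∑ k ∈ Finset.range (n+2),
      ((Nat.factorial k : ℝ)⁻¹ * t^k) • iteratedDerivWithin k f s 0 with hFdef
    have hF0 : F 0 = 0 := by
      simp only [hFdef]
      rw [Finset.sum_eq_single 0]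
      · simp
      · intro k _ hk
        rcases Nat.exists_eq_succ_of_ne_zero hk with ⟨m, rfl⟩
        simp
      · simp
    have hr0 : r 0 = 0 := by
      simp only [hrdef]
      rw [Finset.sum_eq_single 0]
      · simp
      · intro k _ hk
        rcases Nat.exists_eq_succ_of_ne_zero hk with ⟨m, rfl⟩
        simp
      · simp
    have hFd : ∀ x ∈ s, HasDerivAt F (r x) x := by
      intro x hx
      have hfd : HasDerivAt f (g x) x := by
        have : DifferentiableAt ℝ f x := by
          exact (hf.differentiableOn (by simp) x hx).differentiableAt
            (hs.mem_nhds hx)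
        have h1 := this.hasDerivAt
        rwa [hg, derivWithin_of_isOpen hs hx]
      have hsum : HasDerivAt (fun t : ℝ => ∑ k ∈ Finset.range (n+2),
          ((Nat.factorial k : ℝ)⁻¹ * t^k) • iteratedDerivWithin k f s 0)
          (∑ k ∈ Finset.range (n+1),
            ((Nat.factorial k : ℝ)⁻¹ * x^k) • iteratedDerivWithin k g s 0) x := by
        have h1 : HasDerivAt (fun t : ℝ => ∑ k ∈ Finset.range (n+2),
            ((Nat.factorial k : ℝ)⁻¹ * t^k) • iteratedDerivWithin k f s 0)
            (∑ k ∈ Finset.range (n+2),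
              ((Nat.factorial k : ℝ)⁻¹ * (k * x^(k-1))) • iteratedDerivWithin k f s 0) x := by
          apply HasDerivAt.fun_sum
          intro k _
          exact (((hasDerivAt_pow k x).const_mul ((Nat.factorial k : ℝ)⁻¹))).smul_const _
        convert h1 using 1
        rw [Finset.sum_range_succ' (fun k => ((Nat.factorial k : ℝ)⁻¹ * (k * x^(k-1))) • iteratedDerivWithin k f s 0) (n+1)]
        simp only [Nat.cast_zero, zero_mul, mul_zero, zero_smul, add_zero]
        apply Finset.sum_congr rfl
        intro k _
        rw [iteratedDerivWithin_succ']
        congr 1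
        have : (Nat.factorial (k+1) : ℝ) = (k+1) * (Nat.factorial k) := by exact_mod_cast Nat.factorial_succ k
        rw [this]
        field_simp
        rw [show k + 1 - 1 = k from by omega]; push_cast; ring
      exact hfd.sub hsum
    -- now the limit
    rw [NormedAddCommGroup.tendsto_nhds_zero]
    intro ε hε
    have hev : ∀ᶠ t in 𝓝 (0:ℝ), ‖r t‖ ≤ (ε/2) * |t|^n := by
      have h1 : ∀ᶠ t in 𝓝[≠] (0:ℝ), ‖(t^n)⁻¹ • r t‖ < ε/2 := by
        rw [NormedAddCommGroup.tendsto_nhds_zero] at hr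
        exact hr (ε/2) (by linarith)
      rw [eventually_nhdsWithin_iff] at h1
      filter_upwards [h1] with t ht
      rcases eq_or_ne t 0 with rfl | htne
      · simp only [hr0, norm_zero]
        positivity
      · have h2 := le_of_lt (ht htne)
        rw [norm_smul, norm_inv, norm_pow, Real.norm_eq_abs] at h2
        have hpos : (0:ℝ) < |t|^n := pow_pos (abs_pos.mpr htne) n
        rw [inv_mul_le_iff₀ hpos] at h2
        linarith [h2]
    rcases Metric.eventually_nhds_iff.mp (hev.and (hs.eventually_mem h0)) with ⟨δ, hδ, hball⟩
    rw [eventually_nhdsWithin_iff]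
    rw [Metric.eventually_nhds_iff]
    refine ⟨δ, hδ, fun {t} ht htne => ?_⟩
    have htne' : t ≠ 0 := htne
    have habs : |t| < δ := by rwa [Real.dist_eq, sub_zero] at ht
    have hmem : ∀ x ∈ uIcc (0:ℝ) t, |x| ≤ |t| := by
      intro x hx
      rcases le_total (0:ℝ) t with h | h
      · rw [uIcc_of_le h] at hx
        rw [abs_of_nonneg hx.1, abs_of_nonneg h]; exact hx.2
      · rw [uIcc_of_ge h] at hx
        rw [abs_of_nonpos hx.2, abs_of_nonpos h]; linarith [hx.1]
    have hball : ∀ x ∈ uIcc (0:ℝ) t, (‖r x‖ ≤ ε/2 * |x|^n ∧ x ∈ s) := by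
      intro x hx
      exact hball (show dist x 0 < δ by rw [Real.dist_eq, sub_zero]; exact lt_of_le_of_lt (hmem x hx) habs)
    have hbound : ‖F t - F 0‖ ≤ (ε/2 * |t|^n) * ‖t - 0‖ := by
      apply Convex.norm_image_sub_le_of_norm_hasDerivWithin_le
        (f' := r) (fun x hx => ((hFd x (hball x hx).2).hasDerivWithinAt))
        (fun x hx => ?_) (convex_uIcc 0 t) left_mem_uIcc right_mem_uIcc
      calc ‖r x‖ ≤ ε/2 * |x|^n := (hball x hx).1
        _ ≤ ε/2 * |t|^n := by
            have := pow_le_pow_left₀ (abs_nonneg x) (hmem x hx) n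
            have h2 : (0:ℝ) ≤ ε/2 := by linarith
            exact mul_le_mul_of_nonneg_left this h2
    rw [hF0, sub_zero, sub_zero] at hbound
    have htabs : (0:ℝ) < |t| := abs_pos.mpr htne'
    have : ‖(t^(n+1))⁻¹ • F t‖ ≤ ε/2 := by
      rw [norm_smul, norm_inv, norm_pow, Real.norm_eq_abs]
      rw [Real.norm_eq_abs] at hbound
      rw [inv_mul_le_iff₀ (pow_pos htabs (n+1))]
      calc ‖F t‖ ≤ ε/2 * |t|^n * |t| := hbound
        _ = |t|^(n+1) * (ε/2) := by ring
    exact lt_of_le_of_lt this (by linarith)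


theorem extract_stage {m : ℕ} {x : E} {g : ℝ → E} (hg : ContinuousAt g 0)
    (h : Tendsto (fun t : ℝ => (t^(m+1))⁻¹ • (x + t • g t)) (𝓝[≠] (0:ℝ)) (𝓝 0)) :
    x = 0 ∧ Tendsto (fun t : ℝ => (t^m)⁻¹ • g t) (𝓝[≠] (0:ℝ)) (𝓝 0) := by
  have hf : Tendsto (fun t : ℝ => x + t • g t) (𝓝[≠] (0:ℝ)) (𝓝 x) := by
    have : Tendsto (fun t : ℝ => x + t • g t) (𝓝 (0:ℝ)) (𝓝 (x + (0:ℝ) • g 0)) := by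
      exact tendsto_const_nhds.add ((continuousAt_id.smul hg).tendsto)
    simpa using this.mono_left nhdsWithin_le_nhds
  have hf0 : Tendsto (fun t : ℝ => x + t • g t) (𝓝[≠] (0:ℝ)) (𝓝 0) := by
    have h2 : Tendsto (fun t : ℝ => (t^(m+1)) • ((t^(m+1))⁻¹ • (x + t • g t)))
        (𝓝[≠] (0:ℝ)) (𝓝 0) := by
      have hp : Tendsto (fun t : ℝ => t^(m+1)) (𝓝[≠] (0:ℝ)) (𝓝 0) := by
        simpa using (((continuous_pow (m+1)).tendsto (0:ℝ)).mono_left (nhdsWithin_le_nhds : 𝓝[≠] (0:ℝ) ≤ 𝓝 0))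
      simpa using hp.smul h
    apply h2.congr'
    filter_upwards [self_mem_nhdsWithin] with t ht
    rw [smul_inv_smul₀ (pow_ne_zero _ ht)]
  have hx : x = 0 := tendsto_nhds_unique hf hf0
  subst hx
  refine ⟨rfl, ?_⟩
  apply h.congr'
  filter_upwards [self_mem_nhdsWithin] with t ht
  rw [zero_add, smul_smul, pow_succ, mul_inv, mul_assoc, inv_mul_cancel₀ ht, mul_one]

theorem extract_all {d0 d1 d2 d3 d4 : E} {R : ℝ → E} (hR : ContinuousAt R 0)
    (h : Tendsto (fun t : ℝ => (t^4)⁻¹ •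
        (d0 + t • d1 + t^2 • d2 + t^3 • d3 + t^4 • d4 + t^5 • R t)) (𝓝[≠] (0:ℝ)) (𝓝 0)) :
    d0 = 0 ∧ d1 = 0 ∧ d2 = 0 ∧ d3 = 0 ∧ d4 = 0 := by
  have e0 : ∀ t : ℝ, d0 + t • d1 + t^2 • d2 + t^3 • d3 + t^4 • d4 + t^5 • R t
      = d0 + t • (d1 + t • d2 + t^2 • d3 + t^3 • d4 + t^4 • R t) := by
    intro t; module
  have c1 : ContinuousAt (fun t : ℝ => d1 + t • d2 + t^2 • d3 + t^3 • d4 + t^4 • R t) 0 := by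
    fun_prop
  obtain ⟨h0, h⟩ := extract_stage (m := 3) c1 (by simpa only [e0] using h)
  have e1 : ∀ t : ℝ, d1 + t • d2 + t^2 • d3 + t^3 • d4 + t^4 • R t
      = d1 + t • (d2 + t • d3 + t^2 • d4 + t^3 • R t) := by intro t; module
  have c2 : ContinuousAt (fun t : ℝ => d2 + t • d3 + t^2 • d4 + t^3 • R t) 0 := by fun_prop
  obtain ⟨h1, h⟩ := extract_stage (m := 2) c2 (by simpa only [e1] using h)
  have e2 : ∀ t : ℝ, d2 + t • d3 + t^2 • d4 + t^3 • R t
      = d2 + t • (d3 + t • d4 + t^2 • R t) := by intro t; module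
  have c3 : ContinuousAt (fun t : ℝ => d3 + t • d4 + t^2 • R t) 0 := by fun_prop
  obtain ⟨h2, h⟩ := extract_stage (m := 1) c3 (by simpa only [e2] using h)
  have e3 : ∀ t : ℝ, d3 + t • d4 + t^2 • R t = d3 + t • (d4 + t • R t) := by intro t; module
  have c4 : ContinuousAt (fun t : ℝ => d4 + t • R t) 0 := by fun_prop
  obtain ⟨h3, h⟩ := extract_stage (m := 0) c4 (by simpa only [e3] using h)
  have h4 : d4 = 0 := by
    have hf : Tendsto (fun t : ℝ => d4 + t • R t) (𝓝[≠] (0:ℝ)) (𝓝 d4) := by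
      have : Tendsto (fun t : ℝ => d4 + t • R t) (𝓝 (0:ℝ)) (𝓝 (d4 + (0:ℝ) • R 0)) :=
        tendsto_const_nhds.add ((continuousAt_id.smul hR).tendsto)
      simpa using this.mono_left nhdsWithin_le_nhds
    have hf0 : Tendsto (fun t : ℝ => d4 + t • R t) (𝓝[≠] (0:ℝ)) (𝓝 0) := by
      apply h.congr'
      filter_upwards [] with t
      simp
    exact tendsto_nhds_unique hf hf0
  exact ⟨h0, h1, h2, h3, h4⟩


namespace Stmt11

def lin (a b c d : ℝ) (p : ℝ × ℝ) : ℝ × ℝ := (a * p.1 + b * p.2, c * p.1 + d * p.2)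

lemma applyAff_eq (a b c d : ℝ) (v p : ℝ × ℝ) :
    applyAff a b c d v p = lin a b c d p + v := by
  simp [applyAff, lin, Prod.ext_iff]

lemma lin_add (a b c d : ℝ) (p q : ℝ × ℝ) :
    lin a b c d (p + q) = lin a b c d p + lin a b c d q := by
  simp [lin, Prod.ext_iff]; constructor <;> ring

lemma lin_sub (a b c d : ℝ) (p q : ℝ × ℝ) :
    lin a b c d (p - q) = lin a b c d p - lin a b c d q := by
  simp [lin, Prod.ext_iff]; constructor <;> ring

lemma lin_smul (a b c d s : ℝ) (p : ℝ × ℝ) :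
    lin a b c d (s • p) = s • lin a b c d p := by
  simp [lin, Prod.ext_iff, Prod.smul_def, smul_eq_mul]; constructor <;> ring

lemma lin_cont (a b c d : ℝ) : Continuous (lin a b c d) := by
  unfold lin; fun_prop

def Upoly (c1 c2 c3 c4 t : ℝ) : ℝ := c1*t + c2*t^2 + c3*t^3 + c4*t^4

def P4 (m0 m1 m2 m3 m4 : ℝ × ℝ) (x : ℝ) : ℝ × ℝ :=
  m0 + x • m1 + x^2 • m2 + x^3 • m3 + x^4 • m4

def q2 (c1 c2 c3 c4 t : ℝ) : ℝ :=
  2*c2*c3 + 2*c1*c4 + c3^2*t + 2*c2*c4*t + 2*c3*c4*t^2 + c4^2*t^3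

def q3 (c1 c2 c3 c4 t : ℝ) : ℝ :=
  3*c1*c2^2 + 3*c1^2*c3 + c2^3*t + 6*c1*c2*c3*t + 3*c1^2*c4*t + 3*c2^2*c3*t^2 + 3*c1*c3^2*t^2
  + 6*c1*c2*c4*t^2 + 3*c2*c3^2*t^3 + 3*c2^2*c4*t^3 + 6*c1*c3*c4*t^3 + c3^3*t^4 + 6*c2*c3*c4*t^4
  + 3*c1*c4^2*t^4 + 3*c3^2*c4*t^5 + 3*c2*c4^2*t^5 + 3*c3*c4^2*t^6 + c4^3*t^7

def q4 (c1 c2 c3 c4 t : ℝ) : ℝ :=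
  4*c1^3*c2 + 6*c1^2*c2^2*t + 4*c1^3*c3*t + 4*c1*c2^3*t^2 + 12*c1^2*c2*c3*t^2 + 4*c1^3*c4*t^2
  + c2^4*t^3 + 12*c1*c2^2*c3*t^3 + 6*c1^2*c3^2*t^3 + 12*c1^2*c2*c4*t^3 + 4*c2^3*c3*t^4
  + 12*c1*c2*c3^2*t^4 + 12*c1*c2^2*c4*t^4 + 12*c1^2*c3*c4*t^4 + 6*c2^2*c3^2*t^5 + 4*c2^3*c4*t^5
  + 4*c1*c3^3*t^5 + 24*c1*c2*c3*c4*t^5 + 6*c1^2*c4^2*t^5 + 4*c2*c3^3*t^6 + 12*c2^2*c3*c4*t^6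
  + 12*c1*c3^2*c4*t^6 + 12*c1*c2*c4^2*t^6 + c3^4*t^7 + 12*c2*c3^2*c4*t^7 + 6*c2^2*c4^2*t^7
  + 12*c1*c3*c4^2*t^7 + 4*c3^3*c4*t^8 + 12*c2*c3*c4^2*t^8 + 4*c1*c4^3*t^8 + 6*c3^2*c4^2*t^9
  + 4*c2*c4^3*t^9 + 4*c3*c4^3*t^10 + c4^4*t^11

lemma comp_decomp (m0 m1 m2 m3 m4 : ℝ × ℝ) (c1 c2 c3 c4 t : ℝ) :
    P4 m0 m1 m2 m3 m4 (Upoly c1 c2 c3 c4 t) =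
      m0 + t • (c1 • m1)
        + t^2 • (c2 • m1 + (c1^2) • m2)
        + t^3 • (c3 • m1 + (2*c1*c2) • m2 + (c1^3) • m3)
        + t^4 • (c4 • m1 + (2*c1*c3+c2^2) • m2 + (3*c1^2*c2) • m3 + (c1^4) • m4)
        + t^5 • (q2 c1 c2 c3 c4 t • m2 + q3 c1 c2 c3 c4 t • m3 + q4 c1 c2 c3 c4 t • m4) := by
  unfold P4 Upoly q2 q3 q4
  match_scalars <;> ring

def Gp (m1 m2 m3 m4 : ℝ × ℝ) (x y : ℝ) : ℝ × ℝ :=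
  m1 + (x + y) • m2 + (x^2 + x*y + y^2) • m3 + (x^3 + x^2*y + x*y^2 + y^3) • m4

lemma P4_sub (m0 m1 m2 m3 m4 : ℝ × ℝ) (x y : ℝ) :
    P4 m0 m1 m2 m3 m4 x - P4 m0 m1 m2 m3 m4 y = (x - y) • Gp m1 m2 m3 m4 x y := by
  unfold P4 Gp
  match_scalars <;> ring

lemma Gp_cont (m1 m2 m3 m4 : ℝ × ℝ) : Continuous fun p : ℝ × ℝ => Gp m1 m2 m3 m4 p.1 p.2 := by
  unfold Gp; fun_prop



-- Taylor coefficient of a globally smooth curve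
noncomputable def cf (k : ℕ) (γ : ℝ → ℝ × ℝ) : ℝ × ℝ := ((Nat.factorial k : ℝ))⁻¹ • iteratedDeriv k γ 0

lemma taylor4_global (γ : ℝ → ℝ × ℝ) (hγ : ContDiff ℝ (⊤:ℕ∞) γ) :
    Tendsto (fun t : ℝ => (t^4)⁻¹ • (γ t - P4 (cf 0 γ) (cf 1 γ) (cf 2 γ) (cf 3 γ) (cf 4 γ) t))
      (𝓝[≠] (0:ℝ)) (𝓝 0) := by
  have h := taylor_littleO 4 isOpen_univ (mem_univ (0:ℝ)) γ hγ.contDiffOn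
  apply h.congr
  intro t
  congr 1
  simp only [iteratedDerivWithin_univ, Finset.sum_range_succ, Finset.sum_range_zero]
  unfold P4 cf
  match_scalars <;> simp [Nat.factorial] <;> ring

/-- helper: the `if`-patched remainder tends to 0 at `𝓝 0` and satisfies the global identity. -/
lemma remainder_repr (γ : ℝ → ℝ × ℝ) (hγ : ContDiff ℝ (⊤:ℕ∞) γ) :
    ∃ h : ℝ → ℝ × ℝ, Tendsto h (𝓝 (0:ℝ)) (𝓝 0) ∧
      ∀ x : ℝ, γ x - P4 (cf 0 γ) (cf 1 γ) (cf 2 γ) (cf 3 γ) (cf 4 γ) x = x^4 • h x := by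
  classical
  set P := P4 (cf 0 γ) (cf 1 γ) (cf 2 γ) (cf 3 γ) (cf 4 γ)
  refine ⟨fun x => if x = 0 then 0 else (x^4)⁻¹ • (γ x - P x), ?_, ?_⟩
  · rw [← nhdsNE_sup_pure]
    rw [tendsto_sup]
    constructor
    · apply (taylor4_global γ hγ).congr'
      filter_upwards [self_mem_nhdsWithin] with x hx
      have hx' : x ≠ 0 := hx
      simp [hx', P]
    · simpa using tendsto_pure_nhds (fun x : ℝ => if x = 0 then (0:ℝ×ℝ) else (x^4)⁻¹ • (γ x - P x)) 0
  · intro x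
    by_cases hx : x = 0
    · subst hx
      simp [P, P4, cf]
    · simp only [hx, if_false]
      rw [smul_inv_smul₀ (pow_ne_zero _ hx)]

set_option maxHeartbeats 2000000 in
theorem core (γ₁ γ₂ : ℝ → ℝ × ℝ) (hγ₁ : ContDiff ℝ (⊤:ℕ∞) γ₁) (hγ₂ : ContDiff ℝ (⊤:ℕ∞) γ₂)
    (u : ℝ → ℝ) (c1 c2 c3 c4 A B C D : ℝ) (v : ℝ × ℝ) (hu0 : u 0 = 0)
    (hU : Tendsto (fun t => (t^4)⁻¹ * (u t - Upoly c1 c2 c3 c4 t)) (𝓝[≠] (0:ℝ)) (𝓝 0)) :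
    Tendsto (fun t => (t ^ 4)⁻¹ • (applyAff A B C D v (γ₂ (u t)) - γ₁ t))
        (𝓝[≠] (0:ℝ)) (𝓝 (0:ℝ×ℝ))
    ↔ (lin A B C D (cf 0 γ₂) + v = cf 0 γ₁ ∧
       lin A B C D (c1 • cf 1 γ₂) = cf 1 γ₁ ∧
       lin A B C D (c2 • cf 1 γ₂ + (c1^2) • cf 2 γ₂) = cf 2 γ₁ ∧
       lin A B C D (c3 • cf 1 γ₂ + (2*c1*c2) • cf 2 γ₂ + (c1^3) • cf 3 γ₂) = cf 3 γ₁ ∧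
       lin A B C D (c4 • cf 1 γ₂ + (2*c1*c3+c2^2) • cf 2 γ₂ + (3*c1^2*c2) • cf 3 γ₂
          + (c1^4) • cf 4 γ₂) = cf 4 γ₁) := by
  classical
  obtain ⟨h2, h2lim, h2eq⟩ := remainder_repr γ₂ hγ₂
  obtain ⟨h1, h1lim, h1eq⟩ := remainder_repr γ₁ hγ₁
  set a0 := cf 0 γ₂; set a1 := cf 1 γ₂; set a2 := cf 2 γ₂; set a3 := cf 3 γ₂; set a4 := cf 4 γ₂
  set b0 := cf 0 γ₁; set b1 := cf 1 γ₁; set b2 := cf 2 γ₁; set b3 := cf 3 γ₁; set b4 := cf 4 γ₁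
  set U : ℝ → ℝ := Upoly c1 c2 c3 c4 with hUdef
  set P2 := P4 a0 a1 a2 a3 a4 with hP2
  set P1 := P4 b0 b1 b2 b3 b4 with hP1
  -- hu : patched remainder for u
  set hu : ℝ → ℝ := fun t => if t = 0 then 0 else (t^4)⁻¹ * (u t - U t) with hhu
  have hulim : Tendsto hu (𝓝[≠] (0:ℝ)) (𝓝 0) := by
    apply hU.congr'
    filter_upwards [self_mem_nhdsWithin] with t ht
    have ht' : (t:ℝ) ≠ 0 := ht
    simp [hhu, ht']
  have hueq : ∀ t : ℝ, u t - U t = t^4 * hu t := by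
    intro t
    by_cases ht : t = 0
    · subst ht; simp [hhu, hu0, hUdef, Upoly]
    · rw [hhu]; simp only [if_neg ht]
      field_simp
  -- u → 0 and u/t → c1 along 𝓝[≠]0
  have hUcont : Continuous U := by unfold U; unfold Upoly; fun_prop
  have hU0 : U 0 = 0 := by simp [hUdef, Upoly]
  have hulim0 : Tendsto u (𝓝[≠] (0:ℝ)) (𝓝 0) := by
    have hUl : Tendsto U (𝓝[≠] (0:ℝ)) (𝓝 0) := by
      simpa [hU0] using (hUcont.tendsto 0).mono_left (nhdsWithin_le_nhds : 𝓝[≠] (0:ℝ) ≤ 𝓝 0)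
    have hdiff : Tendsto (fun t => u t - U t) (𝓝[≠] (0:ℝ)) (𝓝 0) := by
      have h4 : Tendsto (fun t : ℝ => t^4) (𝓝[≠] (0:ℝ)) (𝓝 0) := by
        simpa using ((continuous_pow 4).tendsto (0:ℝ)).mono_left
          (nhdsWithin_le_nhds : 𝓝[≠] (0:ℝ) ≤ 𝓝 0)
      have := h4.mul hulim
      simp only [mul_zero] at this
      apply this.congr
      intro t
      rw [← hueq t]
    have := hUl.add hdiff
    simp only [add_zero] at this
    apply this.congr
    intro t; ring
  have hslope : Tendsto (fun t => u t / t) (𝓝[≠] (0:ℝ)) (𝓝 c1) := by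
    have hUl : Tendsto (fun t => c1 + c2*t + c3*t^2 + c4*t^3) (𝓝[≠] (0:ℝ)) (𝓝 c1) := by
      have : Continuous fun t : ℝ => c1 + c2*t + c3*t^2 + c4*t^3 := by fun_prop
      simpa using (this.tendsto 0).mono_left (nhdsWithin_le_nhds : 𝓝[≠] (0:ℝ) ≤ 𝓝 0)
    have hdiff : Tendsto (fun t => t^3 * hu t) (𝓝[≠] (0:ℝ)) (𝓝 0) := by
      have h3 : Tendsto (fun t : ℝ => t^3) (𝓝[≠] (0:ℝ)) (𝓝 0) := by
        simpa using ((continuous_pow 3).tendsto (0:ℝ)).mono_left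
          (nhdsWithin_le_nhds : 𝓝[≠] (0:ℝ) ≤ 𝓝 0)
      simpa using h3.mul hulim
    have := hUl.add hdiff
    simp only [add_zero] at this
    apply this.congr'
    filter_upwards [self_mem_nhdsWithin] with t ht
    have ht' : (t:ℝ) ≠ 0 := ht
    have : u t = U t + t^4 * hu t := by linarith [hueq t]
    rw [this, hUdef]
    unfold Upoly
    field_simp
  -- the three little-o terms
  have T1 : Tendsto (fun t => (t^4)⁻¹ • lin A B C D (γ₂ (u t) - P2 (u t)))
      (𝓝[≠] (0:ℝ)) (𝓝 0) := by
    have hcomp : Tendsto (fun t => h2 (u t)) (𝓝[≠] (0:ℝ)) (𝓝 0) := h2lim.comp hulim0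
    have hquot : Tendsto (fun t => (u t / t)^4) (𝓝[≠] (0:ℝ)) (𝓝 (c1^4)) := hslope.pow 4
    have hl : Tendsto (fun t => lin A B C D (h2 (u t))) (𝓝[≠] (0:ℝ)) (𝓝 0) := by
      have := ((lin_cont A B C D).tendsto 0).comp hcomp
      simpa [lin, Function.comp_def, Prod.mk_zero_zero] using this
    have := hquot.smul hl
    simp only [smul_zero] at this
    apply this.congr'
    filter_upwards [self_mem_nhdsWithin] with t ht
    have ht' : (t:ℝ) ≠ 0 := ht
    rw [hP2, h2eq (u t), lin_smul, smul_smul]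
    congr 1
    rw [div_pow]
    field_simp
  have T2 : Tendsto (fun t => (t^4)⁻¹ • lin A B C D (P2 (u t) - P2 (U t)))
      (𝓝[≠] (0:ℝ)) (𝓝 0) := by
    have hG : Tendsto (fun t => lin A B C D (Gp a1 a2 a3 a4 (u t) (U t))) (𝓝[≠] (0:ℝ))
        (𝓝 (lin A B C D (Gp a1 a2 a3 a4 0 0))) := by
      have hUl : Tendsto U (𝓝[≠] (0:ℝ)) (𝓝 0) := by
        simpa [hU0] using (hUcont.tendsto 0).mono_left (nhdsWithin_le_nhds : 𝓝[≠] (0:ℝ) ≤ 𝓝 0)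
      have hpair : Tendsto (fun t => ((u t, U t) : ℝ × ℝ)) (𝓝[≠] (0:ℝ)) (𝓝 (0, 0)) :=
        hulim0.prodMk_nhds hUl
      have hGc : Continuous fun p : ℝ × ℝ => lin A B C D (Gp a1 a2 a3 a4 p.1 p.2) :=
        (lin_cont A B C D).comp (Gp_cont a1 a2 a3 a4)
      have h5 := (hGc.tendsto ((0:ℝ),(0:ℝ))).comp hpair
      simpa [Function.comp_def] using h5
    have := hulim.smul hG
    simp only [zero_smul] at this
    apply this.congr'
    filter_upwards [self_mem_nhdsWithin] with t ht
    rw [hP2, P4_sub, hueq t, lin_smul, smul_smul]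
    congr 1
    have ht' : (t:ℝ) ≠ 0 := ht
    field_simp
  have T3 : Tendsto (fun t => (t^4)⁻¹ • (P1 t - γ₁ t)) (𝓝[≠] (0:ℝ)) (𝓝 0) := by
    have : Tendsto (fun t => -h1 t) (𝓝[≠] (0:ℝ)) (𝓝 0) := by
      simpa using (h1lim.mono_left (nhdsWithin_le_nhds : 𝓝[≠] (0:ℝ) ≤ 𝓝 0)).neg
    apply this.congr'
    filter_upwards [self_mem_nhdsWithin] with t ht
    have ht' : (t:ℝ) ≠ 0 := ht
    rw [hP1, ← neg_sub (γ₁ t), h1eq t, smul_neg, smul_smul]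
    rw [inv_mul_cancel₀ (pow_ne_zero _ ht'), one_smul]
  -- D-term
  set δ0 := lin A B C D a0 + v - b0
  set δ1 := lin A B C D (c1 • a1) - b1
  set δ2 := lin A B C D (c2 • a1 + (c1^2) • a2) - b2
  set δ3 := lin A B C D (c3 • a1 + (2*c1*c2) • a2 + (c1^3) • a3) - b3
  set δ4 := lin A B C D (c4 • a1 + (2*c1*c3+c2^2) • a2 + (3*c1^2*c2) • a3 + (c1^4) • a4) - b4
  set RR : ℝ → ℝ × ℝ := fun t => lin A B C D
      (q2 c1 c2 c3 c4 t • a2 + q3 c1 c2 c3 c4 t • a3 + q4 c1 c2 c3 c4 t • a4) with hRR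
  have hRRcont : Continuous RR := by
    apply (lin_cont A B C D).comp
    unfold q2 q3 q4; fun_prop
  have Dterm : ∀ t : ℝ, lin A B C D (P2 (U t)) + v - P1 t
      = δ0 + t • δ1 + t^2 • δ2 + t^3 • δ3 + t^4 • δ4 + t^5 • RR t := by
    intro t
    rw [hP2, hUdef]
    rw [comp_decomp a0 a1 a2 a3 a4 c1 c2 c3 c4 t]
    simp only [lin_add, lin_smul, hP1, P4]
    unfold δ0 δ1 δ2 δ3 δ4 RR
    simp only [lin_add, lin_smul]
    module
  -- decomposition of the main function
  have split : ∀ t : ℝ, applyAff A B C D v (γ₂ (u t)) - γ₁ t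
      = lin A B C D (γ₂ (u t) - P2 (u t)) + lin A B C D (P2 (u t) - P2 (U t))
        + (lin A B C D (P2 (U t)) + v - P1 t) + (P1 t - γ₁ t) := by
    intro t
    rw [applyAff_eq, lin_sub, lin_sub]
    abel
  have key : Tendsto (fun t => (t ^ 4)⁻¹ • (applyAff A B C D v (γ₂ (u t)) - γ₁ t))
        (𝓝[≠] (0:ℝ)) (𝓝 (0:ℝ×ℝ))
      ↔ Tendsto (fun t => (t ^ 4)⁻¹ • (δ0 + t • δ1 + t^2 • δ2 + t^3 • δ3 + t^4 • δ4 + t^5 • RR t))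
        (𝓝[≠] (0:ℝ)) (𝓝 (0:ℝ×ℝ)) := by
    constructor
    · intro H
      have := ((H.sub T1).sub T2).sub T3
      simp only [sub_zero] at this
      apply this.congr
      intro t
      rw [← Dterm t, split t]
      rw [← smul_sub, ← smul_sub, ← smul_sub]
      congr 1
      abel
    · intro H
      have := ((H.add T1).add T2).add T3
      simp only [add_zero] at this
      apply this.congr
      intro t
      rw [split t, ← Dterm t]
      rw [← smul_add, ← smul_add, ← smul_add]
      congr 1
      abel
  rw [key]
  constructor
  · intro H
    obtain ⟨e0, e1, e2, e3, e4⟩ := extract_all hRRcont.continuousAt H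
    refine ⟨by rwa [← sub_eq_zero], by rwa [← sub_eq_zero], by rwa [← sub_eq_zero],
      by rwa [← sub_eq_zero], by rwa [← sub_eq_zero]⟩
  · rintro ⟨e0, e1, e2, e3, e4⟩
    have hz0 : δ0 = 0 := by unfold δ0; rw [e0]; abel
    have hz1 : δ1 = 0 := by unfold δ1; rw [e1]; abel
    have hz2 : δ2 = 0 := by unfold δ2; rw [e2]; abel
    have hz3 : δ3 = 0 := by unfold δ3; rw [e3]; abel
    have hz4 : δ4 = 0 := by unfold δ4; rw [e4]; abel
    rw [hz0, hz1, hz2, hz3, hz4]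
    have : Tendsto (fun t : ℝ => t • RR t) (𝓝[≠] (0:ℝ)) (𝓝 0) := by
      have hcont : Continuous (fun t : ℝ => t • RR t) := continuous_id.smul hRRcont
      have h6 := hcont.tendsto 0
      simp only [zero_smul] at h6
      exact h6.mono_left (nhdsWithin_le_nhds : 𝓝[≠] (0:ℝ) ≤ 𝓝 0)
    apply this.congr'
    filter_upwards [self_mem_nhdsWithin] with t ht
    have ht' : (t:ℝ) ≠ 0 := ht
    simp only [smul_zero, zero_add]
    rw [smul_smul]
    congr 1
    field_simp
  done



lemma ALG_backward {A B C D c1 c2 c3 c4 : ℝ} {a1 a2 a3 a4 b1 b2 b3 b4 : ℝ × ℝ}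
    (hdet : A*D - B*C = 1) (hXa : det2 a1 a2 = 0)
    (E1 : lin A B C D (c1 • a1) = b1)
    (E2 : lin A B C D (c2 • a1 + (c1^2) • a2) = b2)
    (E3 : lin A B C D (c3 • a1 + (2*c1*c2) • a2 + (c1^3) • a3) = b3)
    (E4 : lin A B C D (c4 • a1 + (2*c1*c3+c2^2) • a2 + (3*c1^2*c2) • a3 + (c1^4) • a4) = b4) :
    det2 b1 b3 = c1^4 * det2 a1 a3 ∧
    det2 b1 b4 - 3*det2 b2 b3 = c1^5 * (det2 a1 a4 - 3*det2 a2 a3) := by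
  subst E1 E2 E3 E4
  simp only [det2, lin, Prod.smul_fst, Prod.smul_snd, Prod.fst_add, Prod.snd_add,
    smul_eq_mul] at *
  constructor
  · linear_combination (2*c1^2*c2*(a1.1*a2.2 - a1.2*a2.1)
      + c1^4*(a1.1*a3.2 - a1.2*a3.1)) * hdet + (2*c1^2*c2) * hXa
  · linear_combination ((5*c1^2*c3 - 5*c1*c2^2)*(a1.1*a2.2 - a1.2*a2.1)
      + c1^5*((a1.1*a4.2 - a1.2*a4.1) - 3*(a2.1*a3.2 - a2.2*a3.1))) * hdet
      + (5*c1^2*c3 - 5*c1*c2^2) * hXa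



lemma lin_basis {a1 a3 : ℝ × ℝ} (n1 n2 : ℝ × ℝ) (h : det2 a1 a3 ≠ 0) :
    ∃ A B C D : ℝ, A*D - B*C = det2 n1 n2 / det2 a1 a3 ∧
      lin A B C D a1 = n1 ∧ lin A B C D a3 = n2 := by
  refine ⟨(n1.1*a3.2 - n2.1*a1.2)/det2 a1 a3, (n2.1*a1.1 - n1.1*a3.1)/det2 a1 a3,
    (n1.2*a3.2 - n2.2*a1.2)/det2 a1 a3, (n2.2*a1.1 - n1.2*a3.1)/det2 a1 a3, ?_, ?_, ?_⟩
  · field_simp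
    simp only [det2]
    ring
  · simp only [lin, Prod.ext_iff]
    constructor <;> (field_simp; simp only [det2]; ring)
  · simp only [lin, Prod.ext_iff]
    constructor <;> (field_simp; simp only [det2]; ring)

lemma cramer {a1 a3 : ℝ × ℝ} (h : det2 a1 a3 ≠ 0) (x : ℝ × ℝ) :
    x = (det2 x a3 / det2 a1 a3) • a1 + (det2 a1 x / det2 a1 a3) • a3 := by
  simp only [det2, Prod.ext_iff, Prod.smul_fst, Prod.smul_snd, Prod.fst_add, Prod.snd_add,
    smul_eq_mul] at h ⊢
  constructor <;> (field_simp [det2] at h ⊢; ring)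

lemma construct (a0 a1 a2 a3 a4 b0 b1 b2 b3 b4 : ℝ × ℝ) (c1 : ℝ)
    (hXa : det2 a1 a2 = 0) (hXb : det2 b1 b2 = 0)
    (hda : det2 a1 a3 ≠ 0) (hdb : det2 b1 b3 ≠ 0)
    (hc1 : c1 ≠ 0) (hc14 : c1^4 * det2 a1 a3 = det2 b1 b3)
    (hmu : c1 * (det2 a1 a4 - 3*det2 a2 a3) * det2 b1 b3
      = (det2 b1 b4 - 3*det2 b2 b3) * det2 a1 a3) :
    ∃ A B C D c2 c3 c4 : ℝ, ∃ v : ℝ × ℝ, A*D - B*C = 1 ∧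
      lin A B C D a0 + v = b0 ∧
      lin A B C D (c1 • a1) = b1 ∧
      lin A B C D (c2 • a1 + (c1^2) • a2) = b2 ∧
      lin A B C D (c3 • a1 + (2*c1*c2) • a2 + (c1^3) • a3) = b3 ∧
      lin A B C D (c4 • a1 + (2*c1*c3+c2^2) • a2 + (3*c1^2*c2) • a3 + (c1^4) • a4) = b4 := by
  have ha2 : a2 = (det2 a2 a3 / det2 a1 a3) • a1 := by
    have := cramer hda a2
    rwa [show det2 a1 a2 = 0 from hXa, zero_div, zero_smul, add_zero] at this
  have hb2 : b2 = (det2 b2 b3 / det2 b1 b3) • b1 := by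
    have := cramer hdb b2
    rwa [show det2 b1 b2 = 0 from hXb, zero_div, zero_smul, add_zero] at this
  have ha4 := cramer hda a4
  have hb4 := cramer hdb b4
  -- scalar abbreviations
  obtain ⟨α, hα⟩ : ∃ x, det2 a2 a3 / det2 a1 a3 = x := ⟨_, rfl⟩
  obtain ⟨β, hβ⟩ : ∃ x, det2 b2 b3 / det2 b1 b3 = x := ⟨_, rfl⟩
  obtain ⟨r, hr⟩ : ∃ x, det2 a1 a4 / det2 a1 a3 = x := ⟨_, rfl⟩
  obtain ⟨sa, hsa⟩ : ∃ x, det2 a4 a3 / det2 a1 a3 = x := ⟨_, rfl⟩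
  obtain ⟨R, hR⟩ : ∃ x, det2 b1 b4 / det2 b1 b3 = x := ⟨_, rfl⟩
  obtain ⟨Sb, hSb⟩ : ∃ x, det2 b4 b3 / det2 b1 b3 = x := ⟨_, rfl⟩
  rw [hα] at ha2
  rw [hβ] at hb2
  rw [hsa, hr] at ha4
  rw [hSb, hR] at hb4
  -- the key scalar coefficient identity
  have hcoef : 3*(c1*(β - c1*α)) + c1^2*r = c1*R := by
    rw [← hα, ← hβ, ← hr, ← hR]
    field_simp
    linear_combination hmu
  obtain ⟨A, B, C, D, hdet0, img1, img3⟩ := lin_basis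
    (c1⁻¹ • b1) ((c1^3)⁻¹ • b3 - ((2*(c1*(β - c1*α))*α)/c1^3) • b1) hda
  have hdet : A*D - B*C = 1 := by
    rw [hdet0]
    have : det2 (c1⁻¹ • b1) ((c1^3)⁻¹ • b3 - ((2*(c1*(β - c1*α))*α)/c1^3) • b1)
        = (c1^4)⁻¹ * det2 b1 b3 := by
      simp only [det2, Prod.smul_fst, Prod.smul_snd, Prod.fst_sub, Prod.snd_sub, smul_eq_mul]
      field_simp
      ring
    rw [this, ← hc14]
    field_simp
  set c2 := c1*(β - c1*α) with hc2
  refine ⟨A, B, C, D, c2, 0, c1*Sb + (3*c1^2*c2 + c1^4*r)*(2*c2*α/c1^2) - c2^2*α - c1^4*sa,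
    b0 - lin A B C D a0, hdet, by abel, ?_, ?_, ?_, ?_⟩
  · rw [lin_smul, img1, smul_smul, mul_inv_cancel₀ hc1, one_smul]
  · rw [ha2, hb2, lin_add, lin_smul, lin_smul, lin_smul, img1]
    match_scalars
    field_simp
    ring
  · rw [ha2, lin_add, lin_add, lin_smul, lin_smul, lin_smul, lin_smul, img1, img3]
    match_scalars <;> field_simp <;> ring
  · rw [ha2, hb4, lin_add, lin_add, lin_add, lin_smul, lin_smul, lin_smul, lin_smul, lin_smul,
      img1, img3]
    rw [ha4, lin_add, lin_smul, lin_smul, img1, img3]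
    match_scalars
    · field_simp
      ring
    · -- b3 coefficient: needs hcoef
      field_simp
      linear_combination hcoef



end Stmt11
end Aux


namespace Stmt11

lemma det2_smul_left (x y : ℝ × ℝ) (s : ℝ) : det2 (s • x) y = s * det2 x y := by
  simp only [det2, Prod.smul_fst, Prod.smul_snd, smul_eq_mul]; ring

lemma det2_smul_right (x y : ℝ × ℝ) (s : ℝ) : det2 x (s • y) = s * det2 x y := by
  simp only [det2, Prod.smul_fst, Prod.smul_snd, smul_eq_mul]; ring

lemma cf_one (γ : ℝ → ℝ × ℝ) : cf 1 γ = deriv γ 0 := by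
  simp [cf, iteratedDeriv_one]

lemma itder_cf (k : ℕ) (γ : ℝ → ℝ × ℝ) :
    iteratedDeriv k γ 0 = (Nat.factorial k : ℝ) • cf k γ := by
  rw [cf, smul_smul, mul_inv_cancel₀ (by exact_mod_cast Nat.factorial_ne_zero k), one_smul]

lemma muI_coeff (γ : ℝ → ℝ × ℝ) (hp : 0 < det2 (deriv γ 0) (iteratedDeriv 3 γ 0)) :
    muI γ = 24 * (det2 (cf 1 γ) (cf 4 γ) - 3 * det2 (cf 2 γ) (cf 3 γ))
      / (6 * det2 (cf 1 γ) (cf 3 γ)) ^ ((5:ℝ)/4) := by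
  have h1 : deriv γ 0 = cf 1 γ := (cf_one γ).symm
  have h2 : iteratedDeriv 2 γ 0 = (2:ℝ) • cf 2 γ := by
    simpa using itder_cf 2 γ
  have h3 : iteratedDeriv 3 γ 0 = (6:ℝ) • cf 3 γ := by
    have := itder_cf 3 γ; norm_num [Nat.factorial] at this; exact this
  have h4 : iteratedDeriv 4 γ 0 = (24:ℝ) • cf 4 γ := by
    have := itder_cf 4 γ; norm_num [Nat.factorial] at this; exact this
  have hd3 : det2 (deriv γ 0) (iteratedDeriv 3 γ 0) = 6 * det2 (cf 1 γ) (cf 3 γ)  := by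
    rw [h1, h3, det2_smul_right]
  unfold muI
  rw [Real.sign_of_pos hp, abs_of_pos hp, hd3, h1, h2, h3, h4,
    det2_smul_right, det2_smul_left, det2_smul_right]
  rw [one_mul]
  congr 1
  ring

lemma rpow_quarter_pow (y : ℝ) (hy : 0 < y) : (y ^ ((1:ℝ)/4))^(4:ℕ) = y := by
  rw [← Real.rpow_natCast (y ^ ((1:ℝ)/4)) 4, ← Real.rpow_mul hy.le]
  norm_num

lemma pow4_rpow (x : ℝ) (hx : 0 < x) : (x^(4:ℕ)) ^ ((5:ℝ)/4) = x^(5:ℕ) := by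
  rw [← Real.rpow_natCast x 4, ← Real.rpow_mul hx.le, ← Real.rpow_natCast x 5]
  norm_num

lemma rpow54_split (y : ℝ) (hy : 0 < y) : y ^ ((5:ℝ)/4) = y * y ^ ((1:ℝ)/4) := by
  rw [show ((5:ℝ)/4) = 1 + (1:ℝ)/4 by norm_num, Real.rpow_add hy, Real.rpow_one]

lemma upoly_hasDeriv (c1 c2 c3 c4 : ℝ) : HasDerivAt (Upoly c1 c2 c3 c4) c1 0 := by
  have h1 : HasDerivAt (fun t : ℝ => c1 * t) c1 0 := by
    simpa using (hasDerivAt_id (0:ℝ)).const_mul c1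
  have h2 : HasDerivAt (fun t : ℝ => c2 * t^2) 0 0 := by
    simpa using (hasDerivAt_pow 2 (0:ℝ)).const_mul c2
  have h3 : HasDerivAt (fun t : ℝ => c3 * t^3) 0 0 := by
    simpa using (hasDerivAt_pow 3 (0:ℝ)).const_mul c3
  have h4 : HasDerivAt (fun t : ℝ => c4 * t^4) 0 0 := by
    simpa using (hasDerivAt_pow 4 (0:ℝ)).const_mul c4
  have := ((h1.add h2).add h3).add h4
  simp only [add_zero] at this
  exact this

lemma upoly_contDiff (c1 c2 c3 c4 : ℝ) : ContDiff ℝ (⊤:ℕ∞) (Upoly c1 c2 c3 c4) := by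
  unfold Upoly; fun_prop

end Stmt11

/-- Two positive generic inflection points have the same affine inflectional curvature
iff they agree, up to an orientation preserving equi-affine transformation and an
orientation preserving change of parameter, to order higher than `t⁴`. -/
theorem stmt_11 (γ₁ γ₂ : ℝ → ℝ × ℝ)
    (hγ₁ : ContDiff ℝ (⊤:ℕ∞) γ₁) (hγ₂ : ContDiff ℝ (⊤:ℕ∞) γ₂)
    (hr₁ : deriv γ₁ 0 ≠ 0) (hr₂ : deriv γ₂ 0 ≠ 0)
    (hi₁ : det2 (deriv γ₁ 0) (iteratedDeriv 2 γ₁ 0) = 0)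
    (hi₂ : det2 (deriv γ₂ 0) (iteratedDeriv 2 γ₂ 0) = 0)
    (hp₁ : 0 < det2 (deriv γ₁ 0) (iteratedDeriv 3 γ₁ 0))
    (hp₂ : 0 < det2 (deriv γ₂ 0) (iteratedDeriv 3 γ₂ 0)) :
    muI γ₁ = muI γ₂ ↔
      ∃ (a b c d : ℝ) (v : ℝ × ℝ), a * d - b * c = 1 ∧
        ∃ ε > (0:ℝ), ∃ u : ℝ → ℝ,
          ContDiffOn ℝ (⊤:ℕ∞) u (Set.Ioo (-ε) ε) ∧ u 0 = 0 ∧ 0 < deriv u 0 ∧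
          Tendsto (fun t => (t ^ 4)⁻¹ • (applyAff a b c d v (γ₂ (u t)) - γ₁ t))
            (𝓝[≠] (0:ℝ)) (𝓝 (0 : ℝ × ℝ)) := by
  classical
  open Stmt11 in
  have hXa : det2 (cf 1 γ₂) (cf 2 γ₂) = 0 := by
    have h2 : iteratedDeriv 2 γ₂ 0 = (2:ℝ) • cf 2 γ₂ := by simpa using itder_cf 2 γ₂
    rw [← cf_one γ₂, h2, det2_smul_right] at hi₂
    linarith
  have hXb : det2 (cf 1 γ₁) (cf 2 γ₁) = 0 := by
    have h2 : iteratedDeriv 2 γ₁ 0 = (2:ℝ) • cf 2 γ₁ := by simpa using itder_cf 2 γ₁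
    rw [← cf_one γ₁, h2, det2_smul_right] at hi₁
    linarith
  have h3a : iteratedDeriv 3 γ₂ 0 = (6:ℝ) • cf 3 γ₂ := by
    have := itder_cf 3 γ₂; norm_num [Nat.factorial] at this; exact this
  have h3b : iteratedDeriv 3 γ₁ 0 = (6:ℝ) • cf 3 γ₁ := by
    have := itder_cf 3 γ₁; norm_num [Nat.factorial] at this; exact this
  have hda : 0 < det2 (cf 1 γ₂) (cf 3 γ₂) := by
    have := hp₂
    rw [← cf_one γ₂, h3a, det2_smul_right] at this
    linarith
  have hdb : 0 < det2 (cf 1 γ₁) (cf 3 γ₁) := by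
    have := hp₁
    rw [← cf_one γ₁, h3b, det2_smul_right] at this
    linarith
  have hmuI2 := muI_coeff γ₂ hp₂
  have hmuI1 := muI_coeff γ₁ hp₁
  set da := det2 (cf 1 γ₂) (cf 3 γ₂) with hdadef
  set db := det2 (cf 1 γ₁) (cf 3 γ₁) with hdbdef
  set na := det2 (cf 1 γ₂) (cf 4 γ₂) - 3 * det2 (cf 2 γ₂) (cf 3 γ₂) with hnadef
  set nb := det2 (cf 1 γ₁) (cf 4 γ₁) - 3 * det2 (cf 2 γ₁) (cf 3 γ₁) with hnbdef
  have h6a : (0:ℝ) < 6 * da := by linarith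
  have h6b : (0:ℝ) < 6 * db := by linarith
  have hpa : (0:ℝ) < (6 * da) ^ ((5:ℝ)/4) := Real.rpow_pos_of_pos h6a _
  have hpb : (0:ℝ) < (6 * db) ^ ((5:ℝ)/4) := Real.rpow_pos_of_pos h6b _
  have hqa : (0:ℝ) < da ^ ((1:ℝ)/4) := Real.rpow_pos_of_pos hda _
  have hqb : (0:ℝ) < db ^ ((1:ℝ)/4) := Real.rpow_pos_of_pos hdb _
  constructor
  · -- forward: equal curvature implies affine equivalence to 4th order
    intro hmu
    set c1 := (db/da) ^ ((1:ℝ)/4) with hc1def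
    have hc1 : 0 < c1 := Real.rpow_pos_of_pos (div_pos hdb hda) _
    have hc14 : c1^4 * da = db := by
      rw [hc1def, rpow_quarter_pow _ (div_pos hdb hda)]
      field_simp
    -- derive the key scalar relation from equal μ_I
    have hsplit : nb * da ^ ((5:ℝ)/4) = na * db ^ ((5:ℝ)/4) := by
      rw [hmuI1, hmuI2] at hmu
      rw [div_eq_div_iff hpb.ne' hpa.ne'] at hmu
      rw [Real.mul_rpow (by norm_num) hda.le, Real.mul_rpow (by norm_num) hdb.le] at hmu
      have h6p : (0:ℝ) < (6:ℝ) ^ ((5:ℝ)/4) := Real.rpow_pos_of_pos (by norm_num) _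
      have := hmu
      nlinarith [this, h6p, sq_nonneg ((6:ℝ)^((5:ℝ)/4))]
    have hmu' : c1 * na * db = nb * da := by
      have hc1eq : c1 = db ^ ((1:ℝ)/4) / da ^ ((1:ℝ)/4) := by
        rw [hc1def, Real.div_rpow hdb.le hda.le]
      apply mul_right_cancel₀ hqa.ne'
      rw [hc1eq]
      rw [rpow54_split _ hda, rpow54_split _ hdb] at hsplit
      field_simp
      linear_combination -hsplit
    obtain ⟨A, B, C, D, c2, c3, c4, v, hdet, E0, E1, E2, E3, E4⟩ :=
      construct (cf 0 γ₂) (cf 1 γ₂) (cf 2 γ₂) (cf 3 γ₂) (cf 4 γ₂)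
        (cf 0 γ₁) (cf 1 γ₁) (cf 2 γ₁) (cf 3 γ₁) (cf 4 γ₁) c1
        hXa hXb hda.ne' hdb.ne' hc1.ne' hc14 hmu'
    refine ⟨A, B, C, D, v, hdet, 1, one_pos, Upoly c1 c2 c3 c4,
      (upoly_contDiff c1 c2 c3 c4).contDiffOn, by simp [Upoly], ?_, ?_⟩
    · rw [(upoly_hasDeriv c1 c2 c3 c4).deriv]
      exact hc1
    · have hU : Tendsto (fun t : ℝ => (t^4)⁻¹ * (Upoly c1 c2 c3 c4 t - Upoly c1 c2 c3 c4 t))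
          (𝓝[≠] (0:ℝ)) (𝓝 0) := by
        simp only [sub_self, mul_zero]
        exact tendsto_const_nhds
      exact (core γ₁ γ₂ hγ₁ hγ₂ (Upoly c1 c2 c3 c4) c1 c2 c3 c4 A B C D v
        (by simp [Upoly]) hU).mpr ⟨E0, E1, E2, E3, E4⟩
  · -- backward: affine equivalence to 4th order implies equal curvature
    rintro ⟨A, B, C, D, v, hdet, ε, hε, u, hucd, hu0, hud, Hlim⟩
    have hsopen : IsOpen (Set.Ioo (-ε) ε) := isOpen_Ioo
    have h0s : (0:ℝ) ∈ Set.Ioo (-ε) ε := by constructor <;> linarith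
    set c1 := (Nat.factorial 1 : ℝ)⁻¹ * iteratedDerivWithin 1 u (Set.Ioo (-ε) ε) 0 with hc1def
    set c2 := (Nat.factorial 2 : ℝ)⁻¹ * iteratedDerivWithin 2 u (Set.Ioo (-ε) ε) 0 with hc2def
    set c3 := (Nat.factorial 3 : ℝ)⁻¹ * iteratedDerivWithin 3 u (Set.Ioo (-ε) ε) 0 with hc3def
    set c4 := (Nat.factorial 4 : ℝ)⁻¹ * iteratedDerivWithin 4 u (Set.Ioo (-ε) ε) 0 with hc4def
    have hc1 : 0 < c1 := by
      rw [hc1def, iteratedDerivWithin_one,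
        derivWithin_of_isOpen hsopen h0s]
      simpa using hud
    have hU : Tendsto (fun t : ℝ => (t^4)⁻¹ * (u t - Upoly c1 c2 c3 c4 t))
        (𝓝[≠] (0:ℝ)) (𝓝 0) := by
      have h := taylor_littleO 4 hsopen h0s u hucd
      apply h.congr
      intro t
      rw [smul_eq_mul]
      congr 2
      simp only [Finset.sum_range_succ, Finset.sum_range_zero, iteratedDerivWithin_zero,
        smul_eq_mul, hu0]
      rw [hc1def, hc2def, hc3def, hc4def]
      unfold Upoly
      push_cast [Nat.factorial]
      ring
    obtain ⟨E0, E1, E2, E3, E4⟩ := (core γ₁ γ₂ hγ₁ hγ₂ u c1 c2 c3 c4 A B C D v hu0 hU).mp Hlim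
    obtain ⟨key1, key2⟩ := ALG_backward hdet hXa E1 E2 E3 E4
    -- key1 : db = c1^4 * da ; key2 : nb = c1^5 * na
    rw [hmuI1, hmuI2]
    have hkey1 : db = c1^4 * da := key1
    have hkey2 : nb = c1^5 * na := key2
    have hden : (6 * db) ^ ((5:ℝ)/4) = c1^(5:ℕ) * (6 * da) ^ ((5:ℝ)/4) := by
      rw [hkey1, show (6:ℝ) * (c1^4 * da) = (c1^(4:ℕ)) * (6 * da) by ring,
        Real.mul_rpow (by positivity) h6a.le, pow4_rpow c1 hc1]
    rw [hden, hkey2]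
    rw [div_eq_div_iff (by positivity) (by positivity)]
    ring
end
end

section
/- Let γ : ℝ → ℝ² be a C^∞ regular curve with a generic inflection point at t = 0. Then the function τ(t) := sgn(t)·|s_A(t)|^{3/4} extends to a C^∞ function on a neighborhood of 0 with τ(0) = 0 and τ'(0) > 0; in particular τ can be taken as a local coordinate of γ at t = 0 (the 3/4-arclength parameter). -/
noncomputable section
open Real Set Filter Topology

open scoped ContDiff
open intervalIntegral MeasureTheory

lemma real_sign_mul_abs (t : ℝ) : Real.sign t * |t| = t := by
  rcases lt_trichotomy t 0 with h | h | h
  · rw [Real.sign_of_neg h, abs_of_neg h]; ring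
  · simp [h]
  · rw [Real.sign_of_pos h, abs_of_pos h]; ring

lemma hasDerivAt_paramInt (k : ℝ → ℝ) (hk : Continuous k) {φ : ℝ → ℝ}
    (hφ : ContDiff ℝ ∞ φ) (t₀ : ℝ) :
    HasDerivAt (fun t => ∫ v in (0:ℝ)..1, k v * φ (t * v))
      (∫ v in (0:ℝ)..1, (k v * v) * deriv φ (t₀ * v)) t₀ := by
  obtain ⟨M₁, hM₁⟩ : ∃ M, ∀ v ∈ Icc (0:ℝ) 1, ‖k v‖ ≤ M :=
    isCompact_Icc.exists_bound_of_continuousOn (hk.continuousOn (s := Icc 0 1))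
  obtain ⟨M₂, hM₂⟩ : ∃ M, ∀ x ∈ Icc (-(|t₀|+1)) (|t₀|+1), ‖deriv φ x‖ ≤ M :=
    isCompact_Icc.exists_bound_of_continuousOn
      ((hφ.continuous_deriv (mod_cast le_top)).continuousOn)
  have hcont : ∀ t : ℝ, Continuous fun v => k v * φ (t * v) := fun t =>
    hk.mul (hφ.continuous.comp (continuous_const.mul continuous_id))
  have key := intervalIntegral.hasDerivAt_integral_of_dominated_loc_of_deriv_le
    (F := fun t v => k v * φ (t * v)) (F' := fun t v => (k v * v) * deriv φ (t * v))
    (x₀ := t₀) (a := (0:ℝ)) (b := 1) (μ := volume) (bound := fun _ => M₁ * M₂)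
    (s := Metric.ball t₀ 1) (Metric.ball_mem_nhds t₀ one_pos)
    (Filter.Eventually.of_forall fun t => (hcont t).aestronglyMeasurable)
    ((hcont t₀).intervalIntegrable 0 1)
    ((hk.mul continuous_id).mul ((hφ.continuous_deriv (mod_cast le_top)).comp
      (continuous_const.mul continuous_id))).aestronglyMeasurable
    ?_ (intervalIntegrable_const) ?_
  · exact key.2
  · refine Filter.Eventually.of_forall fun v hv x hx => ?_
    have hv' : v ∈ Icc (0:ℝ) 1 := Ioc_subset_Icc_self (by simpa [uIoc_of_le] using hv)
    have hxv : x * v ∈ Icc (-(|t₀|+1)) (|t₀|+1) := by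
      have h3 : |x - t₀| < 1 := by simpa [Real.dist_eq] using mem_ball_iff_norm.mp hx
      have h4 := abs_sub_abs_le_abs_sub x t₀
      have hxb : |x| ≤ |t₀| + 1 := by linarith
      have hv1 : |v| ≤ 1 := by rw [abs_of_nonneg hv'.1]; exact hv'.2
      have : |x * v| ≤ |t₀| + 1 := by
        rw [abs_mul]
        nlinarith [abs_nonneg x, abs_nonneg v]
      constructor
      · linarith [neg_abs_le (x*v)]
      · linarith [le_abs_self (x*v)]
    have h1 := hM₁ v hv'
    have h2 := hM₂ _ hxv
    calc ‖k v * v * deriv φ (x * v)‖ = |k v| * |v| * |deriv φ (x*v)| := by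
          simp [abs_mul]
      _ ≤ M₁ * 1 * M₂ := by
          have hv1 : |v| ≤ 1 := by rw [abs_of_nonneg hv'.1]; exact hv'.2
          have h0 : (0:ℝ) ≤ |k v| := abs_nonneg _
          have h0' : (0:ℝ) ≤ |deriv φ (x*v)| := abs_nonneg _
          have hM1 : (0:ℝ) ≤ M₁ := le_trans h0 (by simpa using h1)
          have hM2 : (0:ℝ) ≤ M₂ := le_trans h0' (by simpa using h2)
          have e1 : |k v| ≤ M₁ := by simpa using h1
          have e2 : |deriv φ (x*v)| ≤ M₂ := by simpa using h2
          gcongr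
      _ = M₁ * M₂ := by ring
  · refine Filter.Eventually.of_forall fun v _ x _ => ?_
    have h1 : HasDerivAt (fun x : ℝ => x * v) v x := hasDerivAt_mul_const v
    have h2 : HasDerivAt φ (deriv φ (x * v)) (x * v) :=
      (hφ.differentiable (by simp) _).hasDerivAt
    have := (h2.comp x h1).const_mul (k v)
    simpa [mul_comm, mul_left_comm, mul_assoc] using this

lemma contDiff_paramInt_nat (n : ℕ) : ∀ (k : ℝ → ℝ), Continuous k → ∀ (φ : ℝ → ℝ),
    ContDiff ℝ ∞ φ → ContDiff ℝ n (fun t => ∫ v in (0:ℝ)..1, k v * φ (t * v)) := by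
  induction n with
  | zero =>
    intro k hk φ hφ
    rw [CharP.cast_eq_zero, contDiff_zero]
    exact continuous_iff_continuousAt.2 fun t =>
      (hasDerivAt_paramInt k hk hφ t).continuousAt
  | succ n ih =>
    intro k hk φ hφ
    have hφ' : ContDiff ℝ ∞ (deriv φ) := (contDiff_infty_iff_deriv.mp hφ).2
    have hder : deriv (fun t => ∫ v in (0:ℝ)..1, k v * φ (t * v))
        = fun t => ∫ v in (0:ℝ)..1, (k v * v) * deriv φ (t * v) :=
      funext fun t => (hasDerivAt_paramInt k hk hφ t).deriv
    have : ((n+1 : ℕ) : WithTop ℕ∞) = (n : WithTop ℕ∞) + 1 := by push_cast; ring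
    rw [this, contDiff_succ_iff_deriv]
    refine ⟨fun t => (hasDerivAt_paramInt k hk hφ t).differentiableAt, by simp, ?_⟩
    rw [hder]
    exact ih (fun v => k v * v) (hk.mul continuous_id) (deriv φ) hφ'

lemma contDiff_paramInt (k : ℝ → ℝ) (hk : Continuous k) {φ : ℝ → ℝ}
    (hφ : ContDiff ℝ ∞ φ) :
    ContDiff ℝ ∞ (fun t => ∫ v in (0:ℝ)..1, k v * φ (t * v)) := by
  rw [contDiff_infty]
  exact fun n => contDiff_paramInt_nat n k hk φ hφ

/-- At a generic inflection point, `τ(t) = sgn(t)·|s_A(t)|^{3/4}` extends to a `C^∞`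
function near `0` with `τ(0) = 0` and `τ'(0) > 0`, so it is a local coordinate
(3/4-arclength parameter). -/
theorem stmt_13 (γ : ℝ → ℝ × ℝ) (hγ : ContDiff ℝ (⊤:ℕ∞) γ)
    (hinf : HasGenericInflection γ) :
    ∃ ε > (0:ℝ), ∃ τ : ℝ → ℝ, ContDiffOn ℝ (⊤:ℕ∞) τ (Set.Ioo (-ε) ε) ∧
      (∀ t ∈ Set.Ioo (-ε) ε, τ t = Real.sign t * |sA γ t| ^ ((3:ℝ)/4)) ∧
      τ 0 = 0 ∧ 0 < deriv τ 0 := by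
  -- basic smoothness of derivatives of γ
  have hγ' : ContDiff ℝ ∞ γ := hγ
  have hd1 : ContDiff ℝ ∞ (deriv γ) := (contDiff_infty_iff_deriv.mp hγ').2
  have hd2' : ContDiff ℝ ∞ (deriv (deriv γ)) := (contDiff_infty_iff_deriv.mp hd1).2
  have e2 : iteratedDeriv 2 γ = deriv (deriv γ) := by
    rw [iteratedDeriv_succ, iteratedDeriv_one]
  have e3 : iteratedDeriv 3 γ = deriv (iteratedDeriv 2 γ) := iteratedDeriv_succ
  have hd2 : ContDiff ℝ ∞ (iteratedDeriv 2 γ) := by rw [e2]; exact hd2'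
  -- the function f
  set f : ℝ → ℝ := fun t => det2 (deriv γ t) (iteratedDeriv 2 γ t) with hfdef
  have hf : ContDiff ℝ ∞ f := by
    apply ContDiff.sub
    · exact (contDiff_fst.comp hd1).mul (contDiff_snd.comp hd2)
    · exact (contDiff_snd.comp hd1).mul (contDiff_fst.comp hd2)
  set c : ℝ := det2 (deriv γ 0) (iteratedDeriv 3 γ 0) with hcdef
  have hc : c ≠ 0 := hinf.2.2
  have hf0 : f 0 = 0 := hinf.2.1
  -- derivative of f at 0
  have h1 : HasDerivAt (deriv γ) (iteratedDeriv 2 γ 0) 0 := by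
    rw [e2]; exact ((contDiff_infty_iff_deriv.mp hd1).1 0).hasDerivAt
  have h2 : HasDerivAt (iteratedDeriv 2 γ) (iteratedDeriv 3 γ 0) 0 := by
    rw [e3]; exact ((contDiff_infty_iff_deriv.mp hd2).1 0).hasDerivAt
  have h1a : HasDerivAt (fun t => (deriv γ t).1) (iteratedDeriv 2 γ 0).1 0 :=
    ((ContinuousLinearMap.fst ℝ ℝ ℝ).hasFDerivAt).comp_hasDerivAt 0 h1
  have h1b : HasDerivAt (fun t => (deriv γ t).2) (iteratedDeriv 2 γ 0).2 0 :=
    ((ContinuousLinearMap.snd ℝ ℝ ℝ).hasFDerivAt).comp_hasDerivAt 0 h1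
  have h2a : HasDerivAt (fun t => (iteratedDeriv 2 γ t).1) (iteratedDeriv 3 γ 0).1 0 :=
    ((ContinuousLinearMap.fst ℝ ℝ ℝ).hasFDerivAt).comp_hasDerivAt 0 h2
  have h2b : HasDerivAt (fun t => (iteratedDeriv 2 γ t).2) (iteratedDeriv 3 γ 0).2 0 :=
    ((ContinuousLinearMap.snd ℝ ℝ ℝ).hasFDerivAt).comp_hasDerivAt 0 h2
  have hfd : HasDerivAt f c 0 := by
    have := ((h1a.mul h2b).sub (h1b.mul h2a))
    convert this using 1 <;> try rfl
    rw [hcdef]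
    simp only [det2]
    ring
  -- the division g
  set g : ℝ → ℝ := fun t => ∫ v in (0:ℝ)..1, (1:ℝ) * deriv f (t * v) with hgdef
  have hf' : ContDiff ℝ ∞ (deriv f) := (contDiff_infty_iff_deriv.mp hf).2
  have hg : ContDiff ℝ ∞ g := contDiff_paramInt _ continuous_const hf'
  have hfg : ∀ t, f t = t * g t := by
    intro t
    have h1 : t • ∫ v in (0:ℝ)..1, deriv f (t * v) = ∫ u in (t*0)..(t*1), deriv f u :=
      intervalIntegral.smul_integral_comp_mul_left (deriv f) t
    have h2 : ∫ u in (0:ℝ)..t, deriv f u = f t - f 0 := by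
      apply intervalIntegral.integral_deriv_eq_sub
      · exact fun x _ => (hf.differentiable (by simp)).differentiableAt
      · exact (hf.continuous_deriv (mod_cast le_top)).intervalIntegrable 0 t
    simp only [mul_zero, mul_one] at h1
    rw [h2, hf0, sub_zero] at h1
    rw [← h1]
    simp [hgdef, smul_eq_mul]
  have hg0 : g 0 = c := by
    have h5 : g 0 = ∫ v in (0:ℝ)..1, deriv f 0 := by simp [hgdef]
    rw [h5, hfd.deriv]
    simp
  -- choose δ
  obtain ⟨δ, hδpos, hδ⟩ : ∃ δ > 0, ∀ u, |u| < δ → |g u - c| < |c|/2 := by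
    have := Metric.continuousAt_iff.mp (hg.continuous.continuousAt (x := 0))
    obtain ⟨δ, hδpos, hδ⟩ := this (|c|/2) (by positivity)
    exact ⟨δ, hδpos, fun u hu => by
      have := hδ (x := u) (by simpa [Real.dist_eq] using hu)
      simpa [Real.dist_eq, hg0] using this⟩
  -- bump function
  set B : ContDiffBump (0:ℝ) := ⟨δ/2, δ, by positivity, by linarith⟩ with hBdef
  set gt : ℝ → ℝ := fun u => B u * g u + (1 - B u) * c with hgtdef
  have hgts : ContDiff ℝ ∞ gt :=
    ((B.contDiff.mul hg).add ((contDiff_const.sub B.contDiff).mul contDiff_const))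
  have hgtb : ∀ u, |gt u - c| ≤ |c|/2 := by
    intro u
    have hrw : gt u - c = B u * (g u - c) := by simp [hgtdef]; ring
    rcases lt_or_ge (|u|) δ with h | h
    · rw [hrw, abs_mul]
      have hB1 : |B u| ≤ 1 := by
        rw [abs_of_nonneg (B.nonneg' u)]; exact B.le_one
      have := le_of_lt (hδ u h)
      nlinarith [abs_nonneg (B u), abs_nonneg (g u - c)]
    · have hB0 : B u = 0 := B.zero_of_le_dist (by simpa [Real.dist_eq] using h)
      rw [hrw, hB0]
      simp
      positivity
  have hgtne : ∀ u, gt u ≠ 0 := by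
    intro u h
    have := hgtb u
    rw [h] at this
    simp at this
    have : |c| ≤ |c|/2 := by simpa [abs_neg] using this
    have hcpos : 0 < |c| := abs_pos.2 hc
    linarith
  have hgteq : ∀ u, |u| ≤ δ/2 → gt u = g u := by
    intro u hu
    have hB1 : B u = 1 := B.one_of_mem_closedBall (by
      simpa [Metric.mem_closedBall, Real.dist_eq] using hu)
    simp [hgtdef, hB1]
  -- φ
  set φ : ℝ → ℝ := fun u => (gt u ^ 2) ^ ((1:ℝ)/6) with hφdef
  have hφ : ContDiff ℝ ∞ φ := by
    rw [contDiff_iff_contDiffAt]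
    intro u
    exact (hgts.contDiffAt.pow 2).rpow_const_of_ne (pow_ne_zero 2 (hgtne u))
  have hφpos : ∀ u, 0 < φ u := by
    intro u
    apply Real.rpow_pos_of_pos
    exact lt_of_le_of_ne (sq_nonneg _) (Ne.symm (pow_ne_zero 2 (hgtne u)))
  have hφeq : ∀ u, |u| ≤ δ/2 → φ u = |g u| ^ ((1:ℝ)/3) := by
    intro u hu
    rw [hφdef]
    simp only
    rw [hgteq u hu, ← sq_abs, ← Real.rpow_natCast |g u| 2,
      ← Real.rpow_mul (abs_nonneg _)]
    norm_num
  -- H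
  set H : ℝ → ℝ := fun t => ∫ v in (0:ℝ)..1, |v| ^ ((1:ℝ)/3) * φ (t * v) with hHdef
  have hkcont : Continuous fun v : ℝ => |v| ^ ((1:ℝ)/3) :=
    continuous_abs.rpow_const (fun v => Or.inr (by norm_num))
  have hH : ContDiff ℝ ∞ H := contDiff_paramInt _ hkcont hφ
  have hHpos : ∀ t, 0 < H t := by
    intro t
    apply intervalIntegral.intervalIntegral_pos_of_pos_on
    · exact ((hkcont.mul (hφ.continuous.comp
        (continuous_const.mul continuous_id))).intervalIntegrable 0 1)
    · intro v hv
      exact mul_pos (Real.rpow_pos_of_pos (abs_pos.2 (ne_of_gt hv.1)) _) (hφpos _)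
    · exact one_pos
  -- τ
  set τ : ℝ → ℝ := fun t => t * H t ^ ((3:ℝ)/4) with hτdef
  have hτs : ContDiff ℝ ∞ τ := by
    apply contDiff_id.mul
    rw [contDiff_iff_contDiffAt]
    exact fun t => hH.contDiffAt.rpow_const_of_ne (ne_of_gt (hHpos t))
  -- key identity for sA
  have hsA : ∀ t : ℝ, |t| < δ/2 → sA γ t = t * (|t| ^ ((1:ℝ)/3) * H t) := by
    intro t ht
    have step1 : sA γ t = ∫ u in (0:ℝ)..t, |u| ^ ((1:ℝ)/3) * φ u := by
      apply intervalIntegral.integral_congr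
      intro u hu
      have hub : |u| ≤ |t| := by
        rcases le_total 0 t with h | h
        · rw [uIcc_of_le (by linarith : (0:ℝ) ≤ t)] at hu
          rw [abs_of_nonneg hu.1, abs_of_nonneg h]; exact hu.2
        · rw [uIcc_of_ge (by linarith : t ≤ (0:ℝ))] at hu
          rw [abs_of_nonpos hu.2, abs_of_nonpos h]; linarith [hu.1]
      have hu2 : |u| ≤ δ/2 := le_trans hub (le_of_lt ht)
      show |f u| ^ ((1:ℝ)/3) = |u| ^ ((1:ℝ)/3) * φ u
      rw [hfg u, abs_mul, Real.mul_rpow (abs_nonneg _) (abs_nonneg _), hφeq u hu2]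
    have step2 := intervalIntegral.smul_integral_comp_mul_left
      (f := fun u => |u| ^ ((1:ℝ)/3) * φ u) (a := 0) (b := 1) t
    simp only [mul_zero, mul_one] at step2
    rw [step1, ← step2]
    have step3 : ∀ v : ℝ, |t * v| ^ ((1:ℝ)/3) * φ (t * v)
        = |t| ^ ((1:ℝ)/3) * (|v| ^ ((1:ℝ)/3) * φ (t * v)) := by
      intro v
      rw [abs_mul, Real.mul_rpow (abs_nonneg _) (abs_nonneg _)]
      ring
    simp only [step3]
    rw [intervalIntegral.integral_const_mul]
    simp [smul_eq_mul, hHdef]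
  refine ⟨δ/2, by positivity, τ, hτs.contDiffOn, ?_, by simp [hτdef], ?_⟩
  · intro t ht
    have htb : |t| < δ/2 := abs_lt.2 ⟨ht.1, ht.2⟩
    rcases eq_or_ne t 0 with rfl | htne
    · simp [hτdef, Real.sign_zero]
    · rw [hsA t htb]
      have habs : |t * (|t| ^ ((1:ℝ)/3) * H t)| = |t| * (|t| ^ ((1:ℝ)/3) * H t) := by
        rw [abs_mul, abs_of_nonneg (mul_nonneg (Real.rpow_nonneg (abs_nonneg t) _)
          (le_of_lt (hHpos t)))]
      rw [habs]
      have htpos : (0:ℝ) < |t| := abs_pos.2 htne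
      have hstep : |t| * (|t| ^ ((1:ℝ)/3) * H t) = |t| ^ ((4:ℝ)/3) * H t := by
        rw [← mul_assoc, ← Real.rpow_one_add' (le_of_lt htpos) (by norm_num)]
        norm_num
      rw [hstep, Real.mul_rpow (Real.rpow_nonneg (abs_nonneg t) _)
        (le_of_lt (hHpos t)), ← Real.rpow_mul (abs_nonneg t)]
      norm_num
      rw [← mul_assoc, real_sign_mul_abs]
  · have h1 : HasDerivAt (fun t : ℝ => t) 1 0 := hasDerivAt_id 0
    have h2 : DifferentiableAt ℝ (fun t => H t ^ ((3:ℝ)/4)) 0 :=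
      ((hH.contDiffAt.rpow_const_of_ne (ne_of_gt (hHpos 0))).differentiableAt
        (by simp))
    have h3 := h1.mul h2.hasDerivAt
    have h4 : deriv τ 0 = 1 * H 0 ^ ((3:ℝ)/4) + 0 * deriv (fun t => H t ^ ((3:ℝ)/4)) 0 :=
      h3.deriv
    rw [h4]
    simp only [one_mul, zero_mul, add_zero]
    exact Real.rpow_pos_of_pos (hHpos 0) _
end
end

section
/- Let γ : ℝ → ℝ² be a C^∞ regular curve with a generic inflection point at t = 0, and assume [γ'(t), γ''(t)] ≠ 0 for all t ≠ 0 near 0. Then there exists a C^∞ function F on a neighborhood of 0 such that F(t) = s_A(t)²·κ_A(t) for all t ≠ 0 near 0, and F(0) = −5/16; in particular lim_{t→0} s_A(t)²·κ_A(t) = −5/16. -/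
noncomputable section
open Real Set Filter Topology MeasureTheory intervalIntegral
open scoped ContDiff

/-! ### Auxiliary lemmas -/

lemma iter_smooth {γ : ℝ → ℝ × ℝ} (hγ : ContDiff ℝ ∞ γ) (n : ℕ) :
    ContDiff ℝ ∞ (iteratedDeriv n γ) := by
  rw [iteratedDeriv_eq_iterate]; exact hγ.iterate_deriv n

lemma hasDerivAt_iter {γ : ℝ → ℝ × ℝ} (hγ : ContDiff ℝ ∞ γ) (n : ℕ) (t : ℝ) :
    HasDerivAt (iteratedDeriv n γ) (iteratedDeriv (n + 1) γ t) t := by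
  have hd : DifferentiableAt ℝ (iteratedDeriv n γ) t :=
    ((iter_smooth hγ n).differentiable (by simp)).differentiableAt
  have h2 := hd.hasDerivAt
  rwa [show deriv (iteratedDeriv n γ) t = iteratedDeriv (n + 1) γ t by
    rw [iteratedDeriv_succ]] at h2

lemma hasDerivAt_fst' {f : ℝ → ℝ × ℝ} {f' : ℝ × ℝ} {t : ℝ} (h : HasDerivAt f f' t) :
    HasDerivAt (fun t => (f t).1) f'.1 t := by
  simpa using (h.hasFDerivAt.fst).hasDerivAt

lemma hasDerivAt_snd' {f : ℝ → ℝ × ℝ} {f' : ℝ × ℝ} {t : ℝ} (h : HasDerivAt f f' t) :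
    HasDerivAt (fun t => (f t).2) f'.2 t := by
  simpa using (h.hasFDerivAt.snd).hasDerivAt

lemma det2_hasDerivAt {f g : ℝ → ℝ × ℝ} {f' g' : ℝ × ℝ} {t : ℝ}
    (hf : HasDerivAt f f' t) (hg : HasDerivAt g g' t) :
    HasDerivAt (fun t => det2 (f t) (g t)) (det2 f' (g t) + det2 (f t) g') t := by
  have h := (((hasDerivAt_fst' hf).mul (hasDerivAt_snd' hg)).sub
    ((hasDerivAt_snd' hf).mul (hasDerivAt_fst' hg)))
  refine h.congr_deriv ?_
  simp only [det2]; ring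

lemma det2_smooth {γ : ℝ → ℝ × ℝ} (hγ : ContDiff ℝ ∞ γ) (m n : ℕ) :
    ContDiff ℝ ∞ (fun t => det2 (iteratedDeriv m γ t) (iteratedDeriv n γ t)) := by
  have hm := iter_smooth hγ m
  have hn := iter_smooth hγ n
  exact ((hm.fst.mul hn.snd).sub (hm.snd.mul hn.fst))

/-- The key parametric-integral smoothness lemma. -/
lemma param_contDiffOn {b : ℝ} {w h : ℝ → ℝ}
    (hw : Continuous w) (hh : ContDiffOn ℝ ∞ h (Set.Ioo (-b) b)) :
    ContDiffOn ℝ ∞ (fun t => ∫ v in (0:ℝ)..1, w v * h (t * v)) (Set.Ioo (-b) b) := by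
  set I : Set ℝ := Set.Ioo (-b) b with hI
  have hIopen : IsOpen I := isOpen_Ioo
  have hk : ∀ k : ℕ, ContDiffOn ℝ ∞ (deriv^[k] h) I := by
    intro k; induction k with
    | zero => exact hh
    | succ k ih =>
      rw [Function.iterate_succ']
      exact ((contDiffOn_infty_iff_deriv_of_isOpen hIopen).1 ih).2
  have hmem : ∀ x : ℝ, ∀ r : ℝ, 0 < r → |x| + r < b → ∀ y ∈ Metric.ball x r,
      ∀ v ∈ Set.Icc (0:ℝ) 1, y * v ∈ Set.Icc (-(|x| + r)) (|x| + r) := by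
    intro x r hr0 hxr y hy v hv
    have h1 : |y| ≤ |x| + r := by
      have := abs_sub_abs_le_abs_sub y x
      have h2 : |y - x| < r := by simpa [Real.dist_eq] using hy
      linarith
    have : |y * v| ≤ |x| + r := by
      rw [abs_mul]
      calc |y| * |v| ≤ (|x| + r) * 1 := by
            apply mul_le_mul h1 (by rw [abs_of_nonneg hv.1]; exact hv.2) (abs_nonneg v)
              (by positivity)
        _ = |x| + r := by ring
    exact abs_le.1 this
  have hKI : ∀ x r : ℝ, |x| + r < b → Set.Icc (-(|x| + r)) (|x| + r) ⊆ I := by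
    intro x r hxr u hu
    have h1 := hu.1; have h2 := hu.2
    constructor <;> [linarith; linarith]
  set Ψ : ℕ → ℝ → ℝ := fun k t => ∫ v in (0:ℝ)..1, (w v * v ^ k) * (deriv^[k] h) (t * v)
    with hΨ
  have key : ∀ k : ℕ, ∀ x₀ ∈ I, HasDerivAt (Ψ k) (Ψ (k + 1) x₀) x₀ := by
    intro k x₀ hx₀
    set r : ℝ := (b - |x₀|) / 2 with hr
    have hx₀b : |x₀| < b := abs_lt.2 ⟨hx₀.1, hx₀.2⟩
    have hrpos : 0 < r := by simp only [hr]; linarith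
    have hxrb : |x₀| + r < b := by simp only [hr]; linarith
    set K : Set ℝ := Set.Icc (-(|x₀| + r)) (|x₀| + r) with hK
    have hKsub : K ⊆ I := hKI x₀ r hxrb
    have hKcpt : IsCompact K := isCompact_Icc
    have hcontk : ∀ j : ℕ, ContinuousOn (deriv^[j] h) K :=
      fun j => ((hk j).continuousOn).mono hKsub
    obtain ⟨C, hC⟩ := hKcpt.exists_bound_of_continuousOn (hcontk (k + 1))
    obtain ⟨W, hW⟩ := (isCompact_Icc (a := (0:ℝ)) (b := 1)).exists_bound_of_continuousOn
      hw.continuousOn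
    have hFcont : ∀ x ∈ Metric.ball x₀ r, ∀ j : ℕ,
        ContinuousOn (fun v => (w v * v ^ j) * (deriv^[j] h) (x * v)) (Set.Icc (0:ℝ) 1) := by
      intro x hx j
      apply ContinuousOn.mul
      · exact (hw.continuousOn).mul (continuousOn_pow j)
      · exact (hcontk j).comp (continuousOn_const.mul continuousOn_id)
          (fun v hv => hmem x₀ r hrpos hxrb x hx v hv)
    have hball : Metric.ball x₀ r ∈ 𝓝 x₀ := Metric.ball_mem_nhds x₀ hrpos
    have huIoc : Set.uIoc (0:ℝ) 1 ⊆ Set.Icc (0:ℝ) 1 := by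
      rw [Set.uIoc_of_le (by norm_num : (0:ℝ) ≤ 1)]
      exact Set.Ioc_subset_Icc_self
    have hmain := intervalIntegral.hasDerivAt_integral_of_dominated_loc_of_deriv_le
      (F := fun x v => (w v * v ^ k) * (deriv^[k] h) (x * v))
      (F' := fun x v => (w v * v ^ (k + 1)) * (deriv^[k + 1] h) (x * v))
      (x₀ := x₀) (a := 0) (b := 1) (μ := volume)
      (bound := fun _ => |W| * |C|) hball
      ?_ ?_ ?_ ?_ ?_ ?_
    · have heq : (∫ v in (0:ℝ)..1, (w v * v ^ (k + 1)) * (deriv^[k + 1] h) (x₀ * v))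
          = Ψ (k + 1) x₀ := rfl
      exact heq ▸ hmain.2
    · filter_upwards [hball] with x hx
      exact ((hFcont x hx k).mono huIoc).aestronglyMeasurable measurableSet_uIoc
    · apply ContinuousOn.intervalIntegrable
      rw [Set.uIcc_of_le (by norm_num : (0:ℝ) ≤ 1)]
      exact hFcont x₀ (Metric.mem_ball_self hrpos) k
    · exact ((hFcont x₀ (Metric.mem_ball_self hrpos) (k + 1)).mono
        huIoc).aestronglyMeasurable measurableSet_uIoc
    · apply Filter.Eventually.of_forall
      intro v hv x hx
      have hv' : v ∈ Set.Icc (0:ℝ) 1 := huIoc hv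
      have h1 : ‖w v‖ ≤ |W| := le_trans (hW v hv') (le_abs_self W)
      have h2 : ‖(deriv^[k + 1] h) (x * v)‖ ≤ |C| :=
        le_trans (hC _ (hmem x₀ r hrpos hxrb x hx v hv')) (le_abs_self C)
      have h3 : |v ^ (k + 1)| ≤ 1 := by
        rw [abs_pow]; apply pow_le_one₀ (abs_nonneg v)
        rw [abs_of_nonneg hv'.1]; exact hv'.2
      calc ‖(w v * v ^ (k + 1)) * (deriv^[k + 1] h) (x * v)‖
          = ‖w v‖ * |v ^ (k + 1)| * ‖(deriv^[k + 1] h) (x * v)‖ := by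
            simp [abs_mul]
        _ ≤ |W| * 1 * |C| := by
            apply mul_le_mul _ h2 (norm_nonneg _) (by positivity)
            apply mul_le_mul h1 h3 (abs_nonneg _) (abs_nonneg _)
        _ = |W| * |C| := by ring
    · exact intervalIntegrable_const
    · apply Filter.Eventually.of_forall
      intro v hv x hx
      have hv' : v ∈ Set.Icc (0:ℝ) 1 := huIoc hv
      have hxvI : x * v ∈ I := hKsub (hmem x₀ r hrpos hxrb x hx v hv')
      have hdiff : DifferentiableAt ℝ (deriv^[k] h) (x * v) :=
        (((hk k).contDiffAt (hIopen.mem_nhds hxvI)).differentiableAt (by simp))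
      have hg : HasDerivAt (deriv^[k] h) ((deriv^[k + 1] h) (x * v)) (x * v) := by
        have := hdiff.hasDerivAt
        rwa [show deriv (deriv^[k] h) (x * v) = (deriv^[k + 1] h) (x * v) from
          (Function.iterate_succ_apply' deriv k h ▸ rfl)] at this
      have hinner : HasDerivAt (fun y : ℝ => y * v) v x := by
        simpa using (hasDerivAt_id x).mul_const v
      have hcomp : HasDerivAt (fun y => (deriv^[k] h) (y * v))
          ((deriv^[k + 1] h) (x * v) * v) x := HasDerivAt.comp x hg hinner
      have := hcomp.const_mul (w v * v ^ k)
      refine this.congr_deriv ?_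
      ring
  have hmain : ∀ n : ℕ, ∀ k : ℕ, ContDiffOn ℝ n (Ψ k) I := by
    intro n; induction n with
    | zero =>
      intro k
      simp only [Nat.cast_zero]
      exact contDiffOn_zero.2 fun x hx => ((key k x hx).continuousAt).continuousWithinAt
    | succ n ih =>
      intro k
      have : ContDiffOn ℝ ((n : WithTop ℕ∞) + 1) (Ψ k) I := by
        rw [contDiffOn_succ_iff_deriv_of_isOpen hIopen]
        refine ⟨fun x hx => ((key k x hx).differentiableAt).differentiableWithinAt, ?_, ?_⟩
        · intro hω; exact absurd hω (by simp)
        · exact (ih (k + 1)).congr fun x hx => ((key k x hx).deriv).symm ▸ rfl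
      exact_mod_cast this
  have hfin : ContDiffOn ℝ ∞ (Ψ 0) I := contDiffOn_infty.2 fun n => hmain n 0
  apply hfin.congr
  intro x hx
  simp only [hΨ, pow_zero, mul_one, Function.iterate_zero_apply]

/-! ### The main auxiliary functions -/

def Dfun (γ : ℝ → ℝ × ℝ) (t : ℝ) : ℝ := det2 (iteratedDeriv 1 γ t) (iteratedDeriv 2 γ t)
def D1fun (γ : ℝ → ℝ × ℝ) (t : ℝ) : ℝ := det2 (iteratedDeriv 1 γ t) (iteratedDeriv 3 γ t)
def Efun (γ : ℝ → ℝ × ℝ) (t : ℝ) : ℝ := ∫ v in (0:ℝ)..1, (1:ℝ) * D1fun γ (t * v)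
def qfun (γ : ℝ → ℝ × ℝ) (u : ℝ) : ℝ := (Efun γ u ^ 2) ^ ((1:ℝ)/6)
def Phifun (γ : ℝ → ℝ × ℝ) (t : ℝ) : ℝ := ∫ v in (0:ℝ)..1, v ^ ((1:ℝ)/3) * qfun γ (t * v)
def Nfun (γ : ℝ → ℝ × ℝ) (t : ℝ) : ℝ :=
  3 * Dfun γ t * det2 (iteratedDeriv 1 γ t) (iteratedDeriv 4 γ t)
  + 12 * Dfun γ t * det2 (iteratedDeriv 2 γ t) (iteratedDeriv 3 γ t) - 5 * D1fun γ t ^ 2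
def Ffun (γ : ℝ → ℝ × ℝ) (t : ℝ) : ℝ :=
  Phifun γ t ^ 2 * (Nfun γ t / (9 * (Efun γ t ^ 2) ^ ((4:ℝ)/3)))

lemma hasDerivAt_Dfun {γ : ℝ → ℝ × ℝ} (hγ : ContDiff ℝ ∞ γ) (t : ℝ) :
    HasDerivAt (Dfun γ) (D1fun γ t) t := by
  have h := det2_hasDerivAt (hasDerivAt_iter hγ 1 t) (hasDerivAt_iter hγ 2 t)
  refine h.congr_deriv ?_
  simp only [D1fun, det2]
  norm_num
  ring

lemma Dfun_eq {γ : ℝ → ℝ × ℝ} (hγ : ContDiff ℝ ∞ γ) (hD0 : Dfun γ 0 = 0) (t : ℝ) :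
    Dfun γ t = t * Efun γ t := by
  have hcont : Continuous (D1fun γ) := by
    have := (det2_smooth hγ 1 3).continuous
    exact this
  have hftc : ∫ u in (0:ℝ)..t, D1fun γ u = Dfun γ t - Dfun γ 0 :=
    intervalIntegral.integral_eq_sub_of_hasDerivAt (fun u _ => hasDerivAt_Dfun hγ u)
      (hcont.intervalIntegrable 0 t)
  have hsub := intervalIntegral.smul_integral_comp_mul_left (f := D1fun γ) (c := t)
    (a := (0:ℝ)) (b := 1)
  simp only [mul_zero, mul_one, smul_eq_mul] at hsub
  rw [hD0, sub_zero] at hftc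
  have hE : Efun γ t = ∫ v in (0:ℝ)..1, D1fun γ (t * v) := by
    simp only [Efun, one_mul]
  rw [hE, hsub, hftc]

lemma abs_rpow_third (x : ℝ) : |x| ^ ((1:ℝ)/3) = (x ^ 2) ^ ((1:ℝ)/6) := by
  rw [← sq_abs x, ← Real.rpow_natCast |x| 2, ← Real.rpow_mul (abs_nonneg x)]
  norm_num

lemma abs_rpow_83 (x : ℝ) : |x| ^ ((8:ℝ)/3) = (x ^ 2) ^ ((4:ℝ)/3) := by
  rw [← sq_abs x, ← Real.rpow_natCast |x| 2, ← Real.rpow_mul (abs_nonneg x)]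
  norm_num

lemma kappaA_eq (γ : ℝ → ℝ × ℝ) (t : ℝ) :
    kappaA γ t = Nfun γ t / (9 * |Dfun γ t| ^ ((8:ℝ)/3)) := by
  simp only [kappaA, Nfun, Dfun, D1fun, iteratedDeriv_one]

lemma sA_eq {γ : ℝ → ℝ × ℝ} (hγ : ContDiff ℝ ∞ γ) (hD0 : Dfun γ 0 = 0) (t : ℝ) :
    sA γ t = t * (|t| ^ ((1:ℝ)/3) * Phifun γ t) := by
  have h1 : ∀ u : ℝ, |det2 (deriv γ u) (iteratedDeriv 2 γ u)| ^ ((1:ℝ)/3)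
      = |u| ^ ((1:ℝ)/3) * qfun γ u := by
    intro u
    have hDu : det2 (deriv γ u) (iteratedDeriv 2 γ u) = Dfun γ u := by
      simp only [Dfun, iteratedDeriv_one]
    rw [hDu, Dfun_eq hγ hD0 u, abs_mul,
      Real.mul_rpow (abs_nonneg _) (abs_nonneg _), abs_rpow_third (Efun γ u)]
    rfl
  have h2 : sA γ t = ∫ u in (0:ℝ)..t, |u| ^ ((1:ℝ)/3) * qfun γ u := by
    unfold sA; exact intervalIntegral.integral_congr fun u _ => h1 u
  have hsub := intervalIntegral.smul_integral_comp_mul_left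
    (f := fun u => |u| ^ ((1:ℝ)/3) * qfun γ u) (c := t) (a := (0:ℝ)) (b := 1)
  simp only [mul_zero, mul_one, smul_eq_mul] at hsub
  rw [h2, ← hsub]
  congr 1
  have h3 : Set.EqOn (fun v : ℝ => |t * v| ^ ((1:ℝ)/3) * qfun γ (t * v))
      (fun v : ℝ => |t| ^ ((1:ℝ)/3) * (v ^ ((1:ℝ)/3) * qfun γ (t * v)))
      (Set.uIcc (0:ℝ) 1) := by
    intro v hv
    have hv0 : 0 ≤ v := by
      rw [Set.uIcc_of_le (by norm_num : (0:ℝ) ≤ 1)] at hv; exact hv.1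
    simp only
    rw [abs_mul, Real.mul_rpow (abs_nonneg t) (abs_nonneg v), abs_of_nonneg hv0, mul_assoc]
  rw [intervalIntegral.integral_congr h3, intervalIntegral.integral_const_mul]
  rfl

/-- At a generic inflection point, `(s_A)²·κ_A` extends to a `C^∞` function `F` at
`t = 0` with `F(0) = −5/16`; in particular `lim_{t→0} (s_A)²κ_A = −5/16`. -/
theorem stmt_14 (γ : ℝ → ℝ × ℝ) (hγ : ContDiff ℝ (⊤:ℕ∞) γ)
    (hinf : HasGenericInflection γ)
    (hreg : ∀ᶠ t in 𝓝[≠] (0:ℝ), det2 (deriv γ t) (iteratedDeriv 2 γ t) ≠ 0) :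
    (∃ ε > (0:ℝ), ∃ F : ℝ → ℝ, ContDiffOn ℝ (⊤:ℕ∞) F (Set.Ioo (-ε) ε) ∧
      (∀ t ∈ Set.Ioo (-ε) ε, t ≠ 0 → F t = sA γ t ^ 2 * kappaA γ t) ∧
      F 0 = -(5/16)) ∧
    Tendsto (fun t => sA γ t ^ 2 * kappaA γ t) (𝓝[≠] (0:ℝ)) (𝓝 (-(5/16))) := by
  have hγ' : ContDiff ℝ ∞ γ := hγ
  have hD0 : Dfun γ 0 = 0 := by simpa [Dfun, iteratedDeriv_one] using hinf.2.1
  have hc : D1fun γ 0 ≠ 0 := by simpa [D1fun, iteratedDeriv_one] using hinf.2.2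
  have hD1sm : ContDiff ℝ ∞ (D1fun γ) := det2_smooth hγ' 1 3
  have hEsmooth : ∀ b : ℝ, ContDiffOn ℝ ∞ (Efun γ) (Set.Ioo (-b) b) := fun b =>
    param_contDiffOn continuous_const (hD1sm.contDiffOn)
  have hE0 : Efun γ 0 = D1fun γ 0 := by
    simp [Efun]
  have hEcont0 : ContinuousAt (Efun γ) 0 :=
    ((hEsmooth 1).contDiffAt (isOpen_Ioo.mem_nhds (by norm_num : (0:ℝ) ∈ Set.Ioo (-1) 1))).continuousAt
  have hEne0 : Efun γ 0 ≠ 0 := by rw [hE0]; exact hc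
  have hev : ∀ᶠ t in 𝓝 (0:ℝ), Efun γ t ≠ 0 := hEcont0.eventually_ne hEne0
  rw [Metric.eventually_nhds_iff] at hev
  obtain ⟨ε, hεpos, hball⟩ := hev
  set I : Set ℝ := Set.Ioo (-ε) ε with hIdef
  have hIopen : IsOpen I := isOpen_Ioo
  have h0I : (0:ℝ) ∈ I := ⟨by linarith, hεpos⟩
  have hEne : ∀ t ∈ I, Efun γ t ≠ 0 := by
    intro t ht; apply hball; rw [Real.dist_eq, sub_zero]; exact abs_lt.2 ⟨ht.1, ht.2⟩
  have hEsm : ContDiffOn ℝ ∞ (Efun γ) I := hEsmooth ε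
  have hsq : ContDiffOn ℝ ∞ (fun t => Efun γ t ^ 2) I := hEsm.pow 2
  have hsqne : ∀ t ∈ I, Efun γ t ^ 2 ≠ 0 := fun t ht => pow_ne_zero 2 (hEne t ht)
  have hsqpos : ∀ t ∈ I, (0:ℝ) < Efun γ t ^ 2 :=
    fun t ht => lt_of_le_of_ne (sq_nonneg _) (Ne.symm (hsqne t ht))
  have hq : ContDiffOn ℝ ∞ (qfun γ) I := by
    intro x hx
    unfold qfun
    exact (Real.contDiffAt_rpow_const_of_ne (hsqne x hx)).comp_contDiffWithinAt x
      (hsq.contDiffWithinAt hx)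
  have hQ : ContDiffOn ℝ ∞ (fun t => (Efun γ t ^ 2) ^ ((4:ℝ)/3)) I := by
    intro x hx
    exact (Real.contDiffAt_rpow_const_of_ne (hsqne x hx)).comp_contDiffWithinAt x
      (hsq.contDiffWithinAt hx)
  have hΦ : ContDiffOn ℝ ∞ (Phifun γ) I :=
    param_contDiffOn (Real.continuous_rpow_const (by norm_num)) hq
  have hN : ContDiff ℝ ∞ (Nfun γ) := by
    unfold Nfun Dfun D1fun
    exact (((contDiff_const.mul (det2_smooth hγ' 1 2)).mul (det2_smooth hγ' 1 4)).add
      ((contDiff_const.mul (det2_smooth hγ' 1 2)).mul (det2_smooth hγ' 2 3))).sub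
      (contDiff_const.mul ((det2_smooth hγ' 1 3).pow 2))
  have hFsm : ContDiffOn ℝ ∞ (Ffun γ) I := by
    unfold Ffun
    exact (hΦ.pow 2).mul ((hN.contDiffOn).div (contDiffOn_const.mul hQ)
      (fun x hx => by
        have h2 : 0 < (Efun γ x ^ 2) ^ ((4:ℝ)/3) := Real.rpow_pos_of_pos (hsqpos x hx) _
        positivity))
  have hkey : ∀ t ∈ I, t ≠ 0 → Ffun γ t = sA γ t ^ 2 * kappaA γ t := by
    intro t ht ht0
    have habs : (0:ℝ) < |t| := abs_pos.2 ht0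
    have hsA2 : sA γ t ^ 2 = |t| ^ ((8:ℝ)/3) * Phifun γ t ^ 2 := by
      rw [sA_eq hγ' hD0 t]
      have e1 : (|t| ^ ((1:ℝ)/3)) ^ 2 = |t| ^ ((2:ℝ)/3) := by
        rw [← Real.rpow_natCast (|t| ^ ((1:ℝ)/3)) 2, ← Real.rpow_mul (abs_nonneg t)]
        norm_num
      have e2 : t ^ 2 = |t| ^ (2:ℕ) := (sq_abs t).symm
      have e3 : |t| ^ (2:ℕ) * |t| ^ ((2:ℝ)/3) = |t| ^ ((8:ℝ)/3) := by
        rw [← Real.rpow_natCast |t| 2, ← Real.rpow_add habs]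
        norm_num
      calc (t * (|t| ^ ((1:ℝ)/3) * Phifun γ t)) ^ 2
          = t ^ 2 * ((|t| ^ ((1:ℝ)/3)) ^ 2 * Phifun γ t ^ 2) := by ring
        _ = |t| ^ ((8:ℝ)/3) * Phifun γ t ^ 2 := by
            rw [e1, e2, ← mul_assoc, e3]
    have hkap : kappaA γ t
        = Nfun γ t / (9 * (|t| ^ ((8:ℝ)/3) * (Efun γ t ^ 2) ^ ((4:ℝ)/3))) := by
      rw [kappaA_eq, Dfun_eq hγ' hD0, abs_mul,
        Real.mul_rpow (abs_nonneg _) (abs_nonneg _), abs_rpow_83 (Efun γ t)]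
    rw [hsA2, hkap]
    have h8 : |t| ^ ((8:ℝ)/3) ≠ 0 := (Real.rpow_pos_of_pos habs _).ne'
    have hQne : (Efun γ t ^ 2) ^ ((4:ℝ)/3) ≠ 0 :=
      (Real.rpow_pos_of_pos (hsqpos t ht) _).ne'
    unfold Ffun
    field_simp
  have hΦ0 : Phifun γ 0 = 3/4 * qfun γ 0 := by
    unfold Phifun
    simp only [zero_mul]
    rw [intervalIntegral.integral_mul_const, integral_rpow (Or.inl (by norm_num))]
    rw [Real.one_rpow, Real.zero_rpow (by norm_num : (1:ℝ)/3 + 1 ≠ 0)]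
    norm_num
  have hF0 : Ffun γ 0 = -(5/16) := by
    have hc2 : (0:ℝ) < D1fun γ 0 ^ 2 :=
      lt_of_le_of_ne (sq_nonneg _) (Ne.symm (pow_ne_zero 2 hc))
    set P := D1fun γ 0 ^ 2 with hP
    have hN0 : Nfun γ 0 = -5 * P := by unfold Nfun; rw [hD0]; ring
    have hq0 : qfun γ 0 = P ^ ((1:ℝ)/6) := by unfold qfun; rw [hE0]
    have hE02 : Efun γ 0 ^ 2 = P := by rw [hE0]
    unfold Ffun
    rw [hΦ0, hq0, hN0, hE02]
    have e1 : (P ^ ((1:ℝ)/6)) ^ 2 = P ^ ((1:ℝ)/3) := by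
      rw [← Real.rpow_natCast (P ^ ((1:ℝ)/6)) 2, ← Real.rpow_mul hc2.le]
      norm_num
    have e2 : P ^ ((4:ℝ)/3) = P * P ^ ((1:ℝ)/3) := by
      rw [show (4:ℝ)/3 = 1 + 1/3 by norm_num, Real.rpow_add hc2, Real.rpow_one]
    have e3 : (0:ℝ) < P ^ ((1:ℝ)/3) := Real.rpow_pos_of_pos hc2 _
    rw [mul_pow, e1, e2]
    have hPne : P ≠ 0 := hc2.ne'
    have h13 : P ^ ((1:ℝ)/3) ≠ 0 := e3.ne'
    field_simp
    ring
  refine ⟨⟨ε, hεpos, Ffun γ, hFsm, hkey, hF0⟩, ?_⟩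
  have h1 : Tendsto (Ffun γ) (𝓝[≠] (0:ℝ)) (𝓝 (-(5/16))) := by
    have h2 := ((hFsm.contDiffAt (hIopen.mem_nhds h0I)).continuousAt).tendsto
    rw [hF0] at h2
    exact h2.mono_left nhdsWithin_le_nhds
  apply Filter.Tendsto.congr' ?_ h1
  filter_upwards [nhdsWithin_le_nhds (hIopen.mem_nhds h0I), self_mem_nhdsWithin]
    with t htI ht0
  exact hkey t htI (by simpa using ht0)
end
end
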